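/- arXiv:math/0005059 — 6 statements merged into one kernel-verified Lean document; each statement's English description precedes it below -/
import Mathlib

section
/- Let L, M ∈ Gr_{p,q}, let u_1,…,u_p be an arbitrary (not necessarily orthogonal) basis of L and v_1,…,v_p an arbitrary basis of M. Let U be the p×p matrix with entries ⟨u_i, u_j⟩, V the p×p matrix with entries ⟨v_i, v_j⟩, and W the p×p matrix with entries ⟨u_i, v_j⟩. Then the multiset {λ_1[L,M]², …, λ_p[L,M]²} coincides with the multiset of eigenvalues of the matrix U^{-1} W V^{-1} Wᵗ. -/
open Module Submodule Real Set
open scoped RealInnerProductSpace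

/-- Decreasing rearrangement of a tuple of reals. -/
noncomputable def sortDesc {n : ℕ} (v : Fin n → ℝ) : Fin n → ℝ :=
  fun i => v (Tuple.sort v i.rev)

/-- The singular values of a real `m × n` matrix, listed in decreasing order:
the square roots of the eigenvalues of `A * Aᵀ`. -/
noncomputable def matSingVals {m n : ℕ} (A : Matrix (Fin m) (Fin n) ℝ) : Fin m → ℝ :=
  sortDesc fun i => Real.sqrt ((Matrix.isHermitian_mul_conjTranspose_self A).eigenvalues i)

/-- `v` is an orthonormal basis of the subspace `L`. -/
def IsONBasisOf {n m : ℕ} (v : Fin m → EuclideanSpace ℝ (Fin n))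
    (L : Submodule ℝ (EuclideanSpace ℝ (Fin n))) : Prop :=
  Orthonormal ℝ v ∧ Submodule.span ℝ (Set.range v) = L

/-- The matrix `⟨e i, f j⟩`. -/
noncomputable def grammian {n m : ℕ} (e f : Fin m → EuclideanSpace ℝ (Fin n)) :
    Matrix (Fin m) (Fin m) ℝ :=
  Matrix.of fun i j => ⟪e i, f j⟫

open Classical in
/-- `λ_1[L,M] ≥ … ≥ λ_p[L,M]`: the singular values of the matrix `⟨e i, f j⟩` formed from
orthonormal bases of `L` and `M` (independent of the choice of bases). -/
noncomputable def subSingVals (p : ℕ) {n : ℕ}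
    (L M : Submodule ℝ (EuclideanSpace ℝ (Fin n))) : Fin p → ℝ :=
  if h : (∃ e : Fin p → EuclideanSpace ℝ (Fin n), IsONBasisOf e L) ∧
         (∃ f : Fin p → EuclideanSpace ℝ (Fin n), IsONBasisOf f M)
  then matSingVals (grammian h.1.choose h.2.choose)
  else 0

/-- The Jordan angles `Ψ_1[L,M] ≤ … ≤ Ψ_p[L,M]`. -/
noncomputable def jordanAngles (p : ℕ) {n : ℕ}
    (L M : Submodule ℝ (EuclideanSpace ℝ (Fin n))) : Fin p → ℝ :=
  fun i => Real.arccos (subSingVals p L M i)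

/-- The orbit of a vector under the group `W_p` of signed permutations of the coordinates. -/
def WOrbit {p : ℕ} (v : Fin p → ℝ) : Set (Fin p → ℝ) :=
  {w | ∃ (σ : Equiv.Perm (Fin p)) (ε : Fin p → ℝ),
    (∀ i, ε i = 1 ∨ ε i = -1) ∧ w = fun i => ε i * v (σ i)}


section AuxLemmas

open Polynomial Matrix

/-- Conjugation invariance of the characteristic polynomial. -/
lemma charpoly_conj_aux {p : ℕ} (P M : Matrix (Fin p) (Fin p) ℝ) (hP : IsUnit P.det) :
    (P * M * P⁻¹).charpoly = M.charpoly := by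
  have h1 : P⁻¹ * P = 1 := nonsing_inv_mul P hP
  have h2 : P * P⁻¹ = 1 := mul_nonsing_inv P hP
  have key : charmatrix (P * M * P⁻¹) = (P.map C) * charmatrix M * (P⁻¹.map C) := by
    unfold charmatrix
    rw [RingHom.mapMatrix_apply, RingHom.mapMatrix_apply, Matrix.map_mul, Matrix.map_mul,
      mul_sub, sub_mul]
    congr 1
    rw [mul_assoc, (scalar_commute (X : ℝ[X]) (Commute.all _) _).eq, ← mul_assoc,
      ← Matrix.map_mul, h2]
    simp
  rw [Matrix.charpoly, Matrix.charpoly, key, det_mul, det_mul, mul_comm, ← mul_assoc,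
    ← det_mul, ← Matrix.map_mul, h1]
  simp

lemma charpoly_conj_aux' {p : ℕ} (P M : Matrix (Fin p) (Fin p) ℝ) (hP : IsUnit P.det) :
    (P⁻¹ * M * P).charpoly = M.charpoly := by
  have := charpoly_conj_aux P⁻¹ M (P.isUnit_nonsing_inv_det hP)
  rwa [Matrix.nonsing_inv_nonsing_inv P hP] at this

lemma charpoly_diag_aux {p : ℕ} (d : Fin p → ℝ) :
    (Matrix.diagonal d).charpoly.roots = Multiset.map d Finset.univ.val := by
  have : (Matrix.diagonal d).charpoly = ∏ i : Fin p, (X - C (d i)) := by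
    rw [Matrix.charpoly_of_upperTriangular _ (Matrix.blockTriangular_diagonal d)]
    simp
  rw [this, ← Polynomial.roots_multiset_prod_X_sub_C (Multiset.map d Finset.univ.val)]
  rw [Multiset.map_map, Finset.prod_eq_multiset_prod]
  rfl

lemma hermitian_roots_aux {p : ℕ} {H : Matrix (Fin p) (Fin p) ℝ} (hH : H.IsHermitian) :
    H.charpoly.roots = Multiset.map hH.eigenvalues Finset.univ.val := by
  have hspec := hH.spectral_theorem
  have hU : IsUnit ((hH.eigenvectorUnitary : Matrix (Fin p) (Fin p) ℝ)).det := by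
    have := (hH.eigenvectorUnitary).2
    rw [Matrix.mem_unitaryGroup_iff] at this
    apply IsUnit.of_mul_eq_one (star (hH.eigenvectorUnitary : Matrix (Fin p) (Fin p) ℝ)).det
    rw [← Matrix.det_mul, this, Matrix.det_one]
  have hinv : (star (hH.eigenvectorUnitary : Matrix (Fin p) (Fin p) ℝ)) =
      (hH.eigenvectorUnitary : Matrix (Fin p) (Fin p) ℝ)⁻¹ := by
    apply (Matrix.inv_eq_right_inv ?_).symm
    have := (hH.eigenvectorUnitary).2
    rw [Matrix.mem_unitaryGroup_iff] at this
    exact this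
  have : H.charpoly = (Matrix.diagonal hH.eigenvalues).charpoly := by
    conv_lhs => rw [hspec, Unitary.conjStarAlgAut_apply]
    rw [hinv, charpoly_conj_aux _ _ hU]
    norm_num [Function.comp]
  rw [this, charpoly_diag_aux]

/-- Any `p`-dimensional subspace admits an orthonormal basis. -/
lemma exists_isONBasisOf {n p : ℕ} (L : Submodule ℝ (EuclideanSpace ℝ (Fin n)))
    (hL : finrank ℝ L = p) :
    ∃ e : Fin p → EuclideanSpace ℝ (Fin n), IsONBasisOf e L := by
  let b : OrthonormalBasis (Fin p) ℝ ↥L :=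
    (stdOrthonormalBasis ℝ ↥L).reindex (finCongr hL)
  refine ⟨fun i => (b i : EuclideanSpace ℝ (Fin n)), ?_, ?_⟩
  · rw [orthonormal_iff_ite]
    intro i j
    rw [← Submodule.coe_inner]
    exact orthonormal_iff_ite.mp b.orthonormal i j
  · have : Set.range (fun i => (b i : EuclideanSpace ℝ (Fin n))) =
        L.subtype '' Set.range b := by
      rw [← Set.range_comp]; rfl
    have hspan : Submodule.span ℝ (Set.range ⇑b) = ⊤ := by
      rw [← b.coe_toBasis]; exact b.toBasis.span_eq
    rw [this, ← Submodule.map_span, hspan]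
    exact Submodule.map_subtype_top L

lemma grammian_self_eq_one {n p : ℕ} {e : Fin p → EuclideanSpace ℝ (Fin n)}
    (he : Orthonormal ℝ e) : grammian e e = 1 := by
  ext i j
  rw [grammian, Matrix.of_apply, orthonormal_iff_ite.mp he i j, Matrix.one_apply]

lemma gram_formula {n p : ℕ} (e f : Fin p → EuclideanSpace ℝ (Fin n))
    (A B : Matrix (Fin p) (Fin p) ℝ) (i j : Fin p) :
    ⟪∑ k, A k i • e k, ∑ l, B l j • f l⟫ = (Aᵀ * grammian e f * B) i j := by
  simp only [sum_inner, inner_sum, real_inner_smul_left, real_inner_smul_right,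
    Matrix.mul_apply, Matrix.transpose_apply, grammian, Matrix.of_apply, Finset.sum_mul]
  refine Finset.sum_congr rfl fun k _ => Finset.sum_congr rfl fun l _ => by ring

end AuxLemmas

open Matrix Polynomial

/-- For arbitrary (not necessarily orthogonal) bases `u` of `L` and `v` of `M`, with Gram
matrices `U = (⟨u_i,u_j⟩)`, `V = (⟨v_i,v_j⟩)` and `W = (⟨u_i,v_j⟩)`, the multiset
`{λ_1[L,M]², …, λ_p[L,M]²}` coincides with the multiset of eigenvalues of
`U⁻¹ W V⁻¹ Wᵀ`. -/
theorem lambda_sq_eq_eigenvalues_of_gram (p q : ℕ) (hp : 1 ≤ p) (hpq : p ≤ q)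
    (L M : Submodule ℝ (EuclideanSpace ℝ (Fin (p + q))))
    (hL : finrank ℝ L = p) (hM : finrank ℝ M = p)
    (u : Basis (Fin p) ℝ ↥L) (v : Basis (Fin p) ℝ ↥M)
    (U V W : Matrix (Fin p) (Fin p) ℝ)
    (hU : ∀ i j, U i j = ⟪(u i : EuclideanSpace ℝ (Fin (p + q))), (u j : EuclideanSpace ℝ (Fin (p + q)))⟫)
    (hV : ∀ i j, V i j = ⟪(v i : EuclideanSpace ℝ (Fin (p + q))), (v j : EuclideanSpace ℝ (Fin (p + q)))⟫)
    (hW : ∀ i j, W i j = ⟪(u i : EuclideanSpace ℝ (Fin (p + q))), (v j : EuclideanSpace ℝ (Fin (p + q)))⟫) :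
    (U⁻¹ * W * V⁻¹ * W.transpose).charpoly.roots =
      Multiset.map (fun i => subSingVals p L M i ^ 2) Finset.univ.val := by
  classical
  have hex : (∃ e : Fin p → EuclideanSpace ℝ (Fin (p + q)), IsONBasisOf e L) ∧
      (∃ f : Fin p → EuclideanSpace ℝ (Fin (p + q)), IsONBasisOf f M) :=
    ⟨exists_isONBasisOf L hL, exists_isONBasisOf M hM⟩
  haveI : Nonempty (Fin p) := ⟨⟨0, hp⟩⟩
  obtain ⟨heo, hes⟩ := hex.1.choose_spec
  obtain ⟨hfo, hfs⟩ := hex.2.choose_spec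
  set e := hex.1.choose with he_def
  set f := hex.2.choose with hf_def
  have heL : ∀ i, e i ∈ L := fun i => hes ▸ Submodule.subset_span (Set.mem_range_self i)
  have hfM : ∀ i, f i ∈ M := fun i => hfs ▸ Submodule.subset_span (Set.mem_range_self i)
  have honL : Orthonormal ℝ (fun i => (⟨e i, heL i⟩ : ↥L)) := by
    rw [orthonormal_iff_ite] at heo ⊢
    intro i j; rw [Submodule.coe_inner]; exact heo i j
  have honM : Orthonormal ℝ (fun i => (⟨f i, hfM i⟩ : ↥M)) := by
    rw [orthonormal_iff_ite] at hfo ⊢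
    intro i j; rw [Submodule.coe_inner]; exact hfo i j
  let Be : Basis (Fin p) ℝ ↥L :=
    basisOfLinearIndependentOfCardEqFinrank honL.linearIndependent (by simp [hL])
  let Bf : Basis (Fin p) ℝ ↥M :=
    basisOfLinearIndependentOfCardEqFinrank honM.linearIndependent (by simp [hM])
  have hBe : ∀ i, (Be i : EuclideanSpace ℝ (Fin (p + q))) = e i := fun i => by
    rw [show Be i = ⟨e i, heL i⟩ from congrFun
      (coe_basisOfLinearIndependentOfCardEqFinrank _ _) i]
  have hBf : ∀ i, (Bf i : EuclideanSpace ℝ (Fin (p + q))) = f i := fun i => by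
    rw [show Bf i = ⟨f i, hfM i⟩ from congrFun
      (coe_basisOfLinearIndependentOfCardEqFinrank _ _) i]
  set A := Be.toMatrix ⇑u with hA_def
  set B := Bf.toMatrix ⇑v with hB_def
  have hu : ∀ j, (u j : EuclideanSpace ℝ (Fin (p + q))) = ∑ k, A k j • e k := by
    intro j
    have h1 := Be.sum_toMatrix_smul_self ⇑u j
    calc (u j : EuclideanSpace ℝ (Fin (p + q)))
        = ((∑ k, A k j • Be k : ↥L) : EuclideanSpace ℝ (Fin (p + q))) := by rw [h1]
      _ = ∑ k, A k j • (Be k : EuclideanSpace ℝ (Fin (p + q))) := by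
          push_cast [Submodule.coe_sum]; rfl
      _ = ∑ k, A k j • e k := by simp only [hBe]
  have hv' : ∀ j, (v j : EuclideanSpace ℝ (Fin (p + q))) = ∑ k, B k j • f k := by
    intro j
    have h1 := Bf.sum_toMatrix_smul_self ⇑v j
    calc (v j : EuclideanSpace ℝ (Fin (p + q)))
        = ((∑ k, B k j • Bf k : ↥M) : EuclideanSpace ℝ (Fin (p + q))) := by rw [h1]
      _ = ∑ k, B k j • (Bf k : EuclideanSpace ℝ (Fin (p + q))) := by
          push_cast [Submodule.coe_sum]; rfl
      _ = ∑ k, B k j • f k := by simp only [hBf]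
  have hU' : U = Aᵀ * A := by
    ext i j
    rw [hU i j, hu i, hu j, gram_formula, grammian_self_eq_one heo, Matrix.mul_one]
  have hV' : V = Bᵀ * B := by
    ext i j
    rw [hV i j, hv' i, hv' j, gram_formula, grammian_self_eq_one hfo, Matrix.mul_one]
  have hW' : W = Aᵀ * grammian e f * B := by
    ext i j
    rw [hW i j, hu i, hv' j, gram_formula]
  haveI iA : Invertible A := Be.invertibleToMatrix u
  haveI iB : Invertible B := Bf.invertibleToMatrix v
  haveI iAt : Invertible Aᵀ := (Matrix.transposeInvertibleEquivInvertible A).symm iA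
  haveI iBt : Invertible Bᵀ := (Matrix.transposeInvertibleEquivInvertible B).symm iB
  have key : U⁻¹ * W * V⁻¹ * W.transpose =
      A⁻¹ * (grammian e f * (grammian e f)ᵀ) * A := by
    rw [hU', hV', hW']
    simp only [Matrix.mul_inv_rev, Matrix.transpose_mul, Matrix.transpose_transpose,
      Matrix.mul_assoc, Matrix.inv_mul_cancel_left_of_invertible,
      Matrix.mul_inv_cancel_left_of_invertible]
  have hΛt : (grammian e f)ᵀ = (grammian e f)ᴴ := by
    ext i j
    simp [Matrix.conjTranspose_apply]
  have hH := Matrix.isHermitian_mul_conjTranspose_self (grammian e f)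
  rw [key, charpoly_conj_aux' A _ (Matrix.isUnit_det_of_invertible A), hΛt,
    hermitian_roots_aux hH]
  have hsv : subSingVals p L M = matSingVals (grammian e f) := by
    rw [subSingVals, dif_pos hex]
  rw [hsv]
  set g : Fin p → ℝ := fun i =>
    Real.sqrt ((Matrix.isHermitian_mul_conjTranspose_self (grammian e f)).eigenvalues i)
    with hg_def
  set σ : Equiv.Perm (Fin p) := Fin.revPerm.trans (Tuple.sort g) with hσ_def
  have hsq : ∀ i : Fin p, matSingVals (grammian e f) i ^ 2 = hH.eigenvalues (σ i) := by
    intro i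
    show (g (Tuple.sort g i.rev)) ^ 2 = _
    rw [Real.sq_sqrt (Matrix.eigenvalues_self_mul_conjTranspose_nonneg (grammian e f) _)]
    rfl
  have hperm : Multiset.map (⇑σ) Finset.univ.val = Finset.univ.val := by
    conv_rhs => rw [← Finset.map_univ_equiv σ]
    rw [Finset.map_val]
    rfl
  calc Multiset.map hH.eigenvalues Finset.univ.val
      = Multiset.map hH.eigenvalues (Multiset.map (⇑σ) Finset.univ.val) := by rw [hperm]
    _ = Multiset.map (fun i => hH.eigenvalues (σ i)) Finset.univ.val := by
        rw [Multiset.map_map]; rfl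
    _ = Multiset.map (fun i => matSingVals (grammian e f) i ^ 2) Finset.univ.val := by
        exact Multiset.map_congr rfl fun i _ => (hsq i).symm
end

section
/- For L, L' ∈ Gr_{p,q} and linear maps H : L → L^⊥ and H' : L' → L'^⊥, the following are equivalent: (i) ρ_j[L;H] = ρ_j[L';H'] for all j = 1,…,p; (ii) there exists g ∈ O(p+q) such that gL = L' and H'(g v) = g(H v) for every v ∈ L. -/
open Module Submodule Real Set
open scoped RealInnerProductSpace

section Helpers

open LinearMap Polynomial

lemma monotone_eq_of_multiset_map_eq {p : ℕ} {f g : Fin p → ℝ}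
    (hf : Monotone f) (hg : Monotone g)
    (h : Multiset.map f Finset.univ.val = Multiset.map g Finset.univ.val) : f = g := by
  rw [Fin.univ_val_map, Fin.univ_val_map, Multiset.coe_eq_coe] at h
  exact List.ofFn_injective (List.Perm.eq_of_sortedLE hf.sortedLE_ofFn hg.sortedLE_ofFn h)

variable {E' : Type*} [NormedAddCommGroup E'] [InnerProductSpace ℝ E'] [FiniteDimensional ℝ E']

lemma charpoly_roots_eigenvalues {n : ℕ} {T : E' →ₗ[ℝ] E'} (hT : T.IsSymmetric)
    (hn : finrank ℝ E' = n) :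
    (LinearMap.charpoly T).roots = Multiset.map (hT.eigenvalues hn) Finset.univ.val := by
  classical
  set b := hT.eigenvectorBasis hn with hbdef
  have hb : (LinearMap.toMatrix b.toBasis b.toBasis T)
      = Matrix.diagonal (hT.eigenvalues hn) := by
    ext i j
    rw [LinearMap.toMatrix_apply, OrthonormalBasis.coe_toBasis, hT.apply_eigenvectorBasis hn j,
      OrthonormalBasis.coe_toBasis_repr_apply]
    simp only [map_smul, ← hbdef, OrthonormalBasis.repr_self]
    rcases eq_or_ne i j with rfl | hij
    · simp [EuclideanSpace.single_apply]
    · simp [EuclideanSpace.single_apply, Matrix.diagonal_apply_ne _ hij, Ne.symm hij, hij]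
  have hcm : Matrix.charpoly (Matrix.diagonal (hT.eigenvalues hn)) =
      ((Finset.univ.val.map (hT.eigenvalues hn)).map fun a => X - C a).prod := by
    rw [Matrix.charpoly]
    have : Matrix.charmatrix (Matrix.diagonal (hT.eigenvalues hn))
        = Matrix.diagonal fun i => (X : ℝ[X]) - C (hT.eigenvalues hn i) := by
      ext i j
      rcases eq_or_ne i j with rfl | hij
      · simp
      · simp [Matrix.charmatrix_apply_ne _ _ _ hij, Matrix.diagonal_apply_ne _ hij]
    rw [this, Matrix.det_diagonal, Finset.prod_eq_multiset_prod, Multiset.map_map]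
    rfl
  rw [← LinearMap.charpoly_toMatrix T b.toBasis, hb, hcm,
    Polynomial.roots_multiset_prod_X_sub_C]

end Helpers

section SVD

open LinearMap

lemma exists_svd_bases (p q : ℕ) (hpq : p ≤ q)
    (L : Submodule ℝ (EuclideanSpace ℝ (Fin (p + q))))
    (hL : finrank ℝ L = p) (H : ↥L →ₗ[ℝ] ↥Lᗮ) (ν : Fin p → ℝ)
    (hmono : Monotone ν) (hpos : ∀ i, 0 ≤ ν i)
    (hroots : (LinearMap.charpoly (LinearMap.adjoint H ∘ₗ H)).roots =
      Multiset.map (fun i => ν i ^ 2) Finset.univ.val) :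
    ∃ (e : OrthonormalBasis (Fin p) ℝ L) (b : OrthonormalBasis (Fin q) ℝ ↥Lᗮ),
      ∀ i, H (e i) = ν i • b (Fin.castLE hpq i) := by
  classical
  set T : ↥L →ₗ[ℝ] ↥L := LinearMap.adjoint H ∘ₗ H with hTdef
  have hT : T.IsSymmetric := by
    intro x y
    simp only [hTdef, LinearMap.comp_apply, LinearMap.adjoint_inner_left,
      LinearMap.adjoint_inner_right]
  set μ := hT.eigenvalues hL with hμdef
  set τ := Tuple.sort μ with hτdef
  have hμτ : μ ∘ τ = fun i => ν i ^ 2 := by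
    apply monotone_eq_of_multiset_map_eq (Tuple.monotone_sort μ)
    · intro i j hij
      exact pow_le_pow_left₀ (hpos i) (hmono hij) 2
    · calc Multiset.map (μ ∘ τ) Finset.univ.val
          = Multiset.map μ (Multiset.map τ Finset.univ.val) := by
            rw [Multiset.map_map]
        _ = Multiset.map μ Finset.univ.val := by rw [Multiset.map_univ_val_equiv]
        _ = (LinearMap.charpoly T).roots := (charpoly_roots_eigenvalues hT hL).symm
        _ = Multiset.map (fun i => ν i ^ 2) Finset.univ.val := hroots
  set e := (hT.eigenvectorBasis hL).reindex τ.symm with hedef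
  have he : ∀ i, e i = hT.eigenvectorBasis hL (τ i) := by
    intro i
    rw [hedef, OrthonormalBasis.reindex_apply, Equiv.symm_symm]
  have heig : ∀ i, T (e i) = (ν i ^ 2) • e i := by
    intro i
    rw [he i, hT.apply_eigenvectorBasis hL (τ i)]
    congr 1
    exact congrFun hμτ i
  have hinner : ∀ i j, ⟪H (e i), H (e j)⟫ = ν i ^ 2 * ⟪e i, e j⟫ := by
    intro i j
    have h1 : ⟪H (e i), H (e j)⟫ = ⟪T (e i), e j⟫ := by
      rw [hTdef, LinearMap.comp_apply, LinearMap.adjoint_inner_left]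
    rw [h1, heig, real_inner_smul_left (F := ↥L)]
  have hee : ∀ i i', ⟪e i, e i'⟫ = if i = i' then 1 else 0 :=
    orthonormal_iff_ite.mp e.orthonormal
  have hHzero : ∀ i, ν i = 0 → H (e i) = 0 := by
    intro i h0
    have : ⟪H (e i), H (e i)⟫ = 0 := by rw [hinner, h0]; ring
    exact inner_self_eq_zero.mp this
  -- partial family in Lᗮ
  set v : Fin q → ↥Lᗮ := fun j => if h : (j : ℕ) < p then (ν ⟨j, h⟩)⁻¹ • H (e ⟨j, h⟩) else 0
    with hvdef
  set s : Set (Fin q) := {j | ∃ h : (j : ℕ) < p, ν ⟨j, h⟩ ≠ 0} with hsdef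
  have hon : Orthonormal ℝ (s.restrict v) := by
    rw [orthonormal_iff_ite]
    rintro ⟨j, hj, hνj⟩ ⟨k, hk, hνk⟩
    simp only [Set.restrict_apply, Set.restrict, hvdef, dif_pos hj, dif_pos hk]
    rw [real_inner_smul_left (F := ↥Lᗮ), real_inner_smul_right (F := ↥Lᗮ), hinner, hee]
    rcases eq_or_ne j k with rfl | hjk
    · simp only [Subtype.mk.injEq, if_true]
      field_simp
    · have h2 : (⟨(j : ℕ), hj⟩ : Fin p) ≠ ⟨(k : ℕ), hk⟩ := by
        simp only [ne_eq, Fin.mk.injEq]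
        exact fun h => hjk (Fin.ext h)
      rw [if_neg h2, if_neg (by simpa [Subtype.mk.injEq] using hjk)]
      ring
  have hq : finrank ℝ ↥Lᗮ = q := by
    have h := Submodule.finrank_add_finrank_orthogonal (K := L)
    rw [hL, finrank_euclideanSpace_fin] at h
    omega
  obtain ⟨b, hb⟩ := hon.exists_orthonormalBasis_extension_of_card_eq (by simp [hq])
  refine ⟨e, b, fun i => ?_⟩
  rcases eq_or_ne (ν i) 0 with h0 | h0
  · rw [h0, zero_smul, hHzero i h0]
  · have hlt : ((Fin.castLE hpq i : Fin q) : ℕ) < p := by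
      simpa using i.2
    have hmk : (⟨((Fin.castLE hpq i : Fin q) : ℕ), hlt⟩ : Fin p) = i := Fin.ext (by simp)
    have hmem : (Fin.castLE hpq i : Fin q) ∈ s := ⟨hlt, by rw [hmk]; exact h0⟩
    rw [hb _ hmem, hvdef]
    simp only [dif_pos hlt, hmk]
    rw [smul_smul, mul_inv_cancel₀ h0, one_smul]

end SVD


set_option maxHeartbeats 1000000 in
/-- Two tangent vectors `H : L → L^⊥`, `H' : L' → L'^⊥` to the Grassmannian have the same
singular values `ρ_1 ≤ … ≤ ρ_p` (encoded here as monotone nonnegative vectors whose squares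
are, with multiplicity, the eigenvalues of `H*H` resp. `H'*H'`) if and only if some
`g ∈ O(p+q)` carries `(L,H)` to `(L',H')`. -/
theorem tangent_singular_values_eq_iff (p q : ℕ) (hp : 1 ≤ p) (hpq : p ≤ q)
    (L L' : Submodule ℝ (EuclideanSpace ℝ (Fin (p + q))))
    (hL : finrank ℝ L = p) (hL' : finrank ℝ L' = p)
    (H : ↥L →ₗ[ℝ] ↥Lᗮ) (H' : ↥L' →ₗ[ℝ] ↥L'ᗮ)
    (ρ ρ' : Fin p → ℝ)
    (hρmono : Monotone ρ) (hρpos : ∀ i, 0 ≤ ρ i)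
    (hρ : (LinearMap.charpoly (LinearMap.adjoint H ∘ₗ H)).roots =
      Multiset.map (fun i => ρ i ^ 2) Finset.univ.val)
    (hρ'mono : Monotone ρ') (hρ'pos : ∀ i, 0 ≤ ρ' i)
    (hρ' : (LinearMap.charpoly (LinearMap.adjoint H' ∘ₗ H')).roots =
      Multiset.map (fun i => ρ' i ^ 2) Finset.univ.val) :
    (∀ j, ρ j = ρ' j) ↔
    (∃ g : EuclideanSpace ℝ (Fin (p + q)) ≃ₗᵢ[ℝ] EuclideanSpace ℝ (Fin (p + q)),
      L.map g.toLinearEquiv.toLinearMap = L' ∧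
      ∀ (v : ↥L) (w : ↥L'), (w : EuclideanSpace ℝ (Fin (p + q))) = g v →
        ((H' w : EuclideanSpace ℝ (Fin (p + q)))) = g (H v : EuclideanSpace ℝ (Fin (p + q)))) := by
  classical
  set E := EuclideanSpace ℝ (Fin (p + q))
  constructor
  · intro h
    have hρρ' : ρ = ρ' := funext h
    obtain ⟨e, b, hsvd⟩ := exists_svd_bases p q hpq L hL H ρ hρmono hρpos hρ
    obtain ⟨e', b', hsvd'⟩ := exists_svd_bases p q hpq L' hL' H' ρ hρmono hρpos
      (by rw [hρ', hρρ'])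
    -- combined orthonormal families
    set u : Fin p ⊕ Fin q → E := Sum.elim (fun i => (e i : E)) (fun j => (b j : E)) with hudef
    set u' : Fin p ⊕ Fin q → E := Sum.elim (fun i => (e' i : E)) (fun j => (b' j : E))
      with hu'def
    have hcross : ∀ (L₀ : Submodule ℝ E) (e₀ : OrthonormalBasis (Fin p) ℝ L₀)
        (b₀ : OrthonormalBasis (Fin q) ℝ ↥L₀ᗮ), Orthonormal ℝ
          (Sum.elim (fun i => ((e₀ i : E))) (fun j => ((b₀ j : E)))) := by
      intro L₀ e₀ b₀
      rw [orthonormal_iff_ite]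
      have he₀ := orthonormal_iff_ite.mp e₀.orthonormal
      have hb₀ := orthonormal_iff_ite.mp b₀.orthonormal
      rintro (i | j) (i' | j')
      · have := he₀ i i'
        rw [Submodule.coe_inner] at this
        simpa [Sum.elim] using this
      · simp only [Sum.elim_inl, Sum.elim_inr]
        rw [if_neg (by simp)]
        exact (Submodule.mem_orthogonal _ _).mp (b₀ j').2 _ (e₀ i).2
      · simp only [Sum.elim_inl, Sum.elim_inr]
        rw [if_neg (by simp)]
        exact (Submodule.mem_orthogonal' _ _).mp (b₀ j).2 _ (e₀ i').2
      · have := hb₀ j j'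
        rw [Submodule.coe_inner] at this
        simpa [Sum.elim] using this
    have hcard : Fintype.card (Fin p ⊕ Fin q) = finrank ℝ E := by
      simp [E, finrank_euclideanSpace_fin]
    haveI : Nonempty (Fin p ⊕ Fin q) := ⟨Sum.inl ⟨0, hp⟩⟩
    set B : OrthonormalBasis (Fin p ⊕ Fin q) ℝ E :=
      (basisOfOrthonormalOfCardEqFinrank (hcross L e b) hcard).toOrthonormalBasis
        (by rw [coe_basisOfOrthonormalOfCardEqFinrank]; exact hcross L e b) with hBdef
    set B' : OrthonormalBasis (Fin p ⊕ Fin q) ℝ E :=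
      (basisOfOrthonormalOfCardEqFinrank (hcross L' e' b') hcard).toOrthonormalBasis
        (by rw [coe_basisOfOrthonormalOfCardEqFinrank]; exact hcross L' e' b') with hB'def
    have hB : ∀ x, B x = u x := by
      intro x
      rw [hBdef]
      rw [show ((basisOfOrthonormalOfCardEqFinrank (hcross L e b) hcard).toOrthonormalBasis _ : _ → E) = _ from Basis.coe_toOrthonormalBasis _ _,
        coe_basisOfOrthonormalOfCardEqFinrank]
    have hB' : ∀ x, B' x = u' x := by
      intro x
      rw [hB'def]
      rw [show ((basisOfOrthonormalOfCardEqFinrank (hcross L' e' b') hcard).toOrthonormalBasis _ : _ → E) = _ from Basis.coe_toOrthonormalBasis _ _,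
        coe_basisOfOrthonormalOfCardEqFinrank]
    set g : E ≃ₗᵢ[ℝ] E := B.repr.trans B'.repr.symm with hgdef
    have hg : ∀ x, g (u x) = u' x := by
      intro x
      rw [← hB x, ← hB' x, hgdef]
      simp [OrthonormalBasis.repr_self, OrthonormalBasis.repr_symm_single]
    have hge : ∀ i, g ((e i : E)) = (e' i : E) := fun i => hg (Sum.inl i)
    have hgb : ∀ j, g ((b j : E)) = (b' j : E) := fun j => hg (Sum.inr j)
    have hLspan : ∀ (L₀ : Submodule ℝ E) (e₀ : OrthonormalBasis (Fin p) ℝ L₀),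
        L₀ = Submodule.span ℝ (Set.range fun i => (e₀ i : E)) := by
      intro L₀ e₀
      conv_lhs => rw [← Submodule.map_subtype_top L₀]
      rw [← Basis.span_eq e₀.toBasis, Submodule.map_span, ← Set.range_comp]
      congr 1
    have hmapL : L.map g.toLinearEquiv.toLinearMap = L' := by
      rw [hLspan L e, hLspan L' e', Submodule.map_span, ← Set.range_comp]
      congr 1
      ext x
      constructor
      · rintro ⟨i, rfl⟩
        exact ⟨i, (hge i).symm⟩
      · rintro ⟨i, rfl⟩
        exact ⟨i, hge i⟩
    refine ⟨g, hmapL, ?_⟩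
    -- the intertwining property
    have hmem : ∀ v : ↥L, (g v : E) ∈ L' := by
      intro v
      rw [← hmapL]
      exact ⟨v, v.2, rfl⟩
    set eL : ↥L →ₗ[ℝ] ↥L' :=
      LinearMap.codRestrict L' (g.toLinearEquiv.toLinearMap ∘ₗ L.subtype) (fun v => hmem v)
      with heLdef
    set φ₁ : ↥L →ₗ[ℝ] E :=
      g.toLinearEquiv.toLinearMap ∘ₗ (Lᗮ.subtype ∘ₗ H) with hφ₁def
    set φ₂ : ↥L →ₗ[ℝ] E := L'ᗮ.subtype ∘ₗ (H' ∘ₗ eL) with hφ₂def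
    have hφ : φ₁ = φ₂ := by
      apply e.toBasis.ext
      intro i
      rw [OrthonormalBasis.coe_toBasis]
      have h1 : φ₁ (e i) = ρ i • (b' (Fin.castLE hpq i) : E) := by
        rw [hφ₁def]
        simp only [LinearMap.comp_apply, Submodule.coe_subtype, LinearEquiv.coe_coe,
          LinearIsometryEquiv.coe_toLinearEquiv]
        rw [hsvd i]
        push_cast
        rw [map_smul, hgb]
      have h2 : φ₂ (e i) = ρ i • (b' (Fin.castLE hpq i) : E) := by
        rw [hφ₂def]
        have heLe : eL (e i) = e' i := Subtype.ext (by
          rw [heLdef]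
          exact hge i)
        simp only [LinearMap.comp_apply, Submodule.coe_subtype, heLe]
        rw [hsvd' i]
        push_cast
        ring
      rw [h1, h2]
    intro v w hw
    have hweq : w = eL v := Subtype.ext hw
    have := LinearMap.congr_fun hφ v
    rw [hφ₁def, hφ₂def] at this
    simp only [LinearMap.comp_apply, Submodule.coe_subtype, LinearEquiv.coe_coe,
      LinearIsometryEquiv.coe_toLinearEquiv] at this
    rw [hweq]
    exact this.symm
  · rintro ⟨g, hmapL, hg⟩
    set eL : ↥L ≃ₗ[ℝ] ↥L' :=
      (g.toLinearEquiv.submoduleMap L).trans (LinearEquiv.ofEq _ _ hmapL) with heLdef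
    have heL : ∀ v : ↥L, (eL v : E) = g v := by
      intro v
      rw [heLdef]
      simp [LinearEquiv.trans_apply]
    have hgP : ∀ x : ↥Lᗮ, g (x : E) ∈ L'ᗮ := by
      intro x
      rw [Submodule.mem_orthogonal]
      intro y hy
      rw [← hmapL] at hy
      obtain ⟨z, hz, rfl⟩ := hy
      simp only [LinearEquiv.coe_coe, LinearIsometryEquiv.coe_toLinearEquiv]
      rw [g.inner_map_map]
      exact (Submodule.mem_orthogonal _ _).mp x.2 z hz
    set eP : ↥Lᗮ →ₗ[ℝ] ↥L'ᗮ :=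
      LinearMap.codRestrict L'ᗮ (g.toLinearEquiv.toLinearMap ∘ₗ Lᗮ.subtype) (fun x => hgP x)
      with hePdef
    have hePc : ∀ x : ↥Lᗮ, (eP x : E) = g x := by
      intro x
      rw [hePdef]
      rfl
    have hHP : ∀ v : ↥L, H' (eL v) = eP (H v) := by
      intro v
      exact Subtype.ext (by rw [hePc]; exact hg v (eL v) (heL v))
    have hPinner : ∀ x y : ↥Lᗮ, ⟪eP x, eP y⟫ = ⟪x, y⟫ := by
      intro x y
      rw [Submodule.coe_inner, Submodule.coe_inner, hePc, hePc]
      exact g.inner_map_map _ _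
    have hLinner : ∀ x y : ↥L, ⟪eL x, eL y⟫ = ⟪x, y⟫ := by
      intro x y
      rw [Submodule.coe_inner, Submodule.coe_inner, heL, heL]
      exact g.inner_map_map _ _
    have hadj : ∀ x : ↥Lᗮ, LinearMap.adjoint H' (eP x) = eL (LinearMap.adjoint H x) := by
      intro x
      apply ext_inner_right ℝ
      intro w
      obtain ⟨v, rfl⟩ := eL.surjective w
      rw [LinearMap.adjoint_inner_left, hHP, hPinner, ← LinearMap.adjoint_inner_left H,
        hLinner]
    have hconj : (eL.conj (LinearMap.adjoint H ∘ₗ H) : ↥L' →ₗ[ℝ] ↥L')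
        = LinearMap.adjoint H' ∘ₗ H' := by
      apply LinearMap.ext
      intro w
      obtain ⟨v, rfl⟩ := eL.surjective w
      rw [LinearEquiv.conj_apply]
      simp only [LinearMap.comp_apply, LinearEquiv.coe_coe, eL.symm_apply_apply]
      rw [hHP, hadj]
    have hcp : LinearMap.charpoly (LinearMap.adjoint H ∘ₗ H)
        = LinearMap.charpoly (LinearMap.adjoint H' ∘ₗ H') := by
      rw [← hconj, LinearEquiv.charpoly_conj]
    have h2 : Multiset.map (fun i => ρ i ^ 2) Finset.univ.val
        = Multiset.map (fun i => ρ' i ^ 2) Finset.univ.val := by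
      rw [← hρ, ← hρ', hcp]
    have h3 : Multiset.map ρ Finset.univ.val = Multiset.map ρ' Finset.univ.val := by
      have h4 := congrArg (Multiset.map Real.sqrt) h2
      rw [Multiset.map_map, Multiset.map_map] at h4
      calc Multiset.map ρ Finset.univ.val
          = Multiset.map (Real.sqrt ∘ fun i => ρ i ^ 2) Finset.univ.val := by
            apply Multiset.map_congr rfl
            intro i _
            simp [Function.comp, Real.sqrt_sq (hρpos i)]
        _ = Multiset.map (Real.sqrt ∘ fun i => ρ' i ^ 2) Finset.univ.val := h4
        _ = Multiset.map ρ' Finset.univ.val := by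
            apply Multiset.map_congr rfl
            intro i _
            simp [Function.comp, Real.sqrt_sq (hρ'pos i)]
    exact congrFun (monotone_eq_of_multiset_map_eq hρmono hρ'mono h3)
end

section
/- The set of all quasistochastic p×p matrices is exactly the convex hull of the finite set of signed permutation matrices, i.e. of the matrices having exactly one nonzero entry in each row and each column, that entry being +1 or −1 (the matrices of the elements of W_p). -/
open Finset Matrix

/-- Any doubly substochastic nonnegative matrix is dominated entrywise by a doubly
stochastic matrix. -/
lemma exists_doublyStochastic_ge (p : ℕ) : ∀ (n : ℕ) (M : Matrix (Fin p) (Fin p) ℝ),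
    ((Finset.univ.filter (fun i => ∑ j, M i j ≠ 1)).card +
      (Finset.univ.filter (fun j => ∑ i, M i j ≠ 1)).card ≤ n) →
    (∀ i j, 0 ≤ M i j) → (∀ i, ∑ j, M i j ≤ 1) → (∀ j, ∑ i, M i j ≤ 1) →
    ∃ S ∈ doublyStochastic ℝ (Fin p), ∀ i j, M i j ≤ S i j := by
  intro n
  induction n with
  | zero =>
    intro M hcard h0 hr hc
    refine ⟨M, ?_, fun i j => le_refl _⟩
    rw [mem_doublyStochastic_iff_sum]
    have h1 : (Finset.univ.filter (fun i : Fin p => ∑ j, M i j ≠ 1)) = ∅ := by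
      apply Finset.card_eq_zero.mp; omega
    have h2 : (Finset.univ.filter (fun j : Fin p => ∑ i, M i j ≠ 1)) = ∅ := by
      apply Finset.card_eq_zero.mp; omega
    rw [Finset.filter_eq_empty_iff] at h1 h2
    refine ⟨h0, fun i => ?_, fun j => ?_⟩
    · have := h1 (Finset.mem_univ i); simpa using this
    · have := h2 (Finset.mem_univ j); simpa using this
  | succ n ih =>
    intro M hcard h0 hr hc
    by_cases hz : ((Finset.univ.filter (fun i : Fin p => ∑ j, M i j ≠ 1)).card +
        (Finset.univ.filter (fun j : Fin p => ∑ i, M i j ≠ 1)).card = 0)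
    · exact ih M (by omega) h0 hr hc
    -- there is a row or column with sum ≠ 1, hence < 1
    have htot : ∑ i, ∑ j, M i j = ∑ j, ∑ i, M i j := Finset.sum_comm
    have key : (∃ i, ∑ j, M i j < 1) → ∃ j, ∑ i, M i j < 1 := by
      rintro ⟨i, hi⟩
      by_contra hco
      push_neg at hco
      have hcol1 : ∀ j, ∑ i, M i j = 1 := fun j => le_antisymm (hc j) (hco j)
      have h1 : ∑ j, ∑ i, M i j = (p : ℝ) := by simp [hcol1]
      have h2 : ∑ i, ∑ j, M i j < (p : ℝ) := by
        calc ∑ i, ∑ j, M i j < ∑ _i : Fin p, (1:ℝ) :=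
              Finset.sum_lt_sum (fun k _ => hr k) ⟨i, Finset.mem_univ i, hi⟩
          _ = (p : ℝ) := by simp
      rw [htot, h1] at h2; exact lt_irrefl _ h2
    have key' : (∃ j, ∑ i, M i j < 1) → ∃ i, ∑ j, M i j < 1 := by
      rintro ⟨j, hj⟩
      by_contra hco
      push_neg at hco
      have hrow1 : ∀ i, ∑ j, M i j = 1 := fun i => le_antisymm (hr i) (hco i)
      have h1 : ∑ i, ∑ j, M i j = (p : ℝ) := by simp [hrow1]
      have h2 : ∑ j, ∑ i, M i j < (p : ℝ) := by
        calc ∑ j, ∑ i, M i j < ∑ _j : Fin p, (1:ℝ) :=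
              Finset.sum_lt_sum (fun k _ => hc k) ⟨j, Finset.mem_univ j, hj⟩
          _ = (p : ℝ) := by simp
      rw [← htot, h1] at h2; exact lt_irrefl _ h2
    have hex : ∃ i, ∑ j, M i j < 1 := by
      rcases Nat.pos_of_ne_zero hz |> fun _ => (by
        by_cases h1 : (Finset.univ.filter (fun i : Fin p => ∑ j, M i j ≠ 1)).card = 0
        · right
          have h2 : (Finset.univ.filter (fun j : Fin p => ∑ i, M i j ≠ 1)).Nonempty := by
            rw [← Finset.card_pos]; omega
          obtain ⟨j, hj⟩ := h2
          rw [Finset.mem_filter] at hj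
          exact ⟨j, lt_of_le_of_ne (hc j) hj.2⟩
        · left
          have h2 : (Finset.univ.filter (fun i : Fin p => ∑ j, M i j ≠ 1)).Nonempty := by
            rw [← Finset.card_pos]; omega
          obtain ⟨i, hi⟩ := h2
          rw [Finset.mem_filter] at hi
          exact ⟨i, lt_of_le_of_ne (hr i) hi.2⟩ :
        (∃ i, ∑ j, M i j < 1) ∨ (∃ j, ∑ i, M i j < 1)) with hh | hh
      · exact hh
      · exact key' hh
    obtain ⟨i, hi⟩ := hex
    obtain ⟨j, hj⟩ := key ⟨i, hi⟩
    set c : ℝ := min (1 - ∑ j', M i j') (1 - ∑ i', M i' j) with hcdef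
    have hcpos : 0 < c := lt_min (by linarith) (by linarith)
    set M' : Matrix (Fin p) (Fin p) ℝ :=
      Matrix.of (fun i' j' => M i' j' + if i' = i ∧ j' = j then c else 0) with hM'def
    have hle : ∀ i' j', M i' j' ≤ M' i' j' := by
      intro i' j'
      simp only [hM'def, Matrix.of_apply]
      split_ifs <;> [linarith; simp]
    have hrowsum : ∀ i', ∑ j', M' i' j' = ∑ j', M i' j' + (if i' = i then c else 0) := by
      intro i'
      simp only [hM'def, Matrix.of_apply, Finset.sum_add_distrib]
      congr 1
      split_ifs with h
      · simp [h]
      · simp [h]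
    have hcolsum : ∀ j', ∑ i', M' i' j' = ∑ i', M i' j' + (if j' = j then c else 0) := by
      intro j'
      simp only [hM'def, Matrix.of_apply, Finset.sum_add_distrib]
      congr 1
      split_ifs with h
      · simp [h]
      · simp [h]
    have h0' : ∀ i' j', 0 ≤ M' i' j' := fun i' j' => le_trans (h0 i' j') (hle i' j')
    have hr' : ∀ i', ∑ j', M' i' j' ≤ 1 := by
      intro i'
      rw [hrowsum]
      split_ifs with h
      · subst h
        have : c ≤ 1 - ∑ j', M i' j' := min_le_left _ _
        linarith
      · simpa using hr i'
    have hc' : ∀ j', ∑ i', M' i' j' ≤ 1 := by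
      intro j'
      rw [hcolsum]
      split_ifs with h
      · subst h
        have : c ≤ 1 - ∑ i', M i' j' := min_le_right _ _
        linarith
      · simpa using hc j'
    -- measure decreases
    have hsubR : (Finset.univ.filter (fun i' : Fin p => ∑ j', M' i' j' ≠ 1)) ⊆
        (Finset.univ.filter (fun i' : Fin p => ∑ j', M i' j' ≠ 1)) := by
      intro i' hi'
      rw [Finset.mem_filter] at hi' ⊢
      refine ⟨Finset.mem_univ _, ?_⟩
      by_cases h : i' = i
      · subst h; exact ne_of_lt hi
      · rw [hrowsum, if_neg h, add_zero] at hi'; exact hi'.2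
    have hsubC : (Finset.univ.filter (fun j' : Fin p => ∑ i', M' i' j' ≠ 1)) ⊆
        (Finset.univ.filter (fun j' : Fin p => ∑ i', M i' j' ≠ 1)) := by
      intro j' hj'
      rw [Finset.mem_filter] at hj' ⊢
      refine ⟨Finset.mem_univ _, ?_⟩
      by_cases h : j' = j
      · subst h; exact ne_of_lt hj
      · rw [hcolsum, if_neg h, add_zero] at hj'; exact hj'.2
    have hdec : (Finset.univ.filter (fun i' : Fin p => ∑ j', M' i' j' ≠ 1)).card +
        (Finset.univ.filter (fun j' : Fin p => ∑ i', M' i' j' ≠ 1)).card ≤ n := by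
      have hcR := Finset.card_le_card hsubR
      have hcC := Finset.card_le_card hsubC
      rcases min_cases (1 - ∑ j', M i j') (1 - ∑ i', M i' j) with ⟨hmin, _⟩ | ⟨hmin, _⟩
      · -- row i becomes tight
        have hrow1 : ∑ j', M' i j' = 1 := by
          rw [hrowsum, if_pos rfl, hcdef, hmin]; ring
        have hiin : i ∈ (Finset.univ.filter (fun i' : Fin p => ∑ j', M i' j' ≠ 1)) := by
          rw [Finset.mem_filter]; exact ⟨Finset.mem_univ _, ne_of_lt hi⟩
        have hiout : i ∉ (Finset.univ.filter (fun i' : Fin p => ∑ j', M' i' j' ≠ 1)) := by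
          rw [Finset.mem_filter]; push_neg; intro _; simp [hrow1]
        have : (Finset.univ.filter (fun i' : Fin p => ∑ j', M' i' j' ≠ 1)).card <
            (Finset.univ.filter (fun i' : Fin p => ∑ j', M i' j' ≠ 1)).card :=
          Finset.card_lt_card ⟨hsubR, fun hsub => hiout (hsub hiin)⟩
        omega
      · -- column j becomes tight
        have hcol1 : ∑ i', M' i' j = 1 := by
          rw [hcolsum, if_pos rfl, hcdef, hmin]; ring
        have hjin : j ∈ (Finset.univ.filter (fun j' : Fin p => ∑ i', M i' j' ≠ 1)) := by
          rw [Finset.mem_filter]; exact ⟨Finset.mem_univ _, ne_of_lt hj⟩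
        have hjout : j ∉ (Finset.univ.filter (fun j' : Fin p => ∑ i', M' i' j' ≠ 1)) := by
          rw [Finset.mem_filter]; push_neg; intro _; simp [hcol1]
        have : (Finset.univ.filter (fun j' : Fin p => ∑ i', M' i' j' ≠ 1)).card <
            (Finset.univ.filter (fun j' : Fin p => ∑ i', M i' j' ≠ 1)).card :=
          Finset.card_lt_card ⟨hsubC, fun hsub => hjout (hsub hjin)⟩
        omega
    obtain ⟨S, hS, hSge⟩ := ih M' hdec h0' hr' hc'
    exact ⟨S, hS, fun i' j' => le_trans (hle i' j') (hSge i' j')⟩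

/-- The set of quasistochastic `p × p` matrices (all column and row `ℓ¹`-sums `≤ 1`) is
exactly the convex hull of the set of signed permutation matrices, i.e. of the matrices of
the elements of the group `W_p`. -/
theorem quasistochastic_eq_convexHull_signed_permutations (p : ℕ) :
    {A : Matrix (Fin p) (Fin p) ℝ |
        (∀ k, ∑ i, |A i k| ≤ 1) ∧ (∀ l, ∑ j, |A l j| ≤ 1)} =
      convexHull ℝ {A : Matrix (Fin p) (Fin p) ℝ |
        ∃ (σ : Equiv.Perm (Fin p)) (ε : Fin p → ℝ),
          (∀ j, ε j = 1 ∨ ε j = -1) ∧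
          A = Matrix.of fun i j => if i = σ j then ε j else 0} := by
  set SP : Set (Matrix (Fin p) (Fin p) ℝ) := {A : Matrix (Fin p) (Fin p) ℝ |
        ∃ (σ : Equiv.Perm (Fin p)) (ε : Fin p → ℝ),
          (∀ j, ε j = 1 ∨ ε j = -1) ∧
          A = Matrix.of fun i j => if i = σ j then ε j else 0} with hSPdef
  set K : Set (Matrix (Fin p) (Fin p) ℝ) := {A : Matrix (Fin p) (Fin p) ℝ |
        (∀ k, ∑ i, |A i k| ≤ 1) ∧ (∀ l, ∑ j, |A l j| ≤ 1)} with hKdef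
  have hKconvex : Convex ℝ K := by
    rintro A hA B hB a b ha hb hab
    constructor
    · intro k
      calc ∑ i, |(a • A + b • B) i k| ≤ ∑ i, (a * |A i k| + b * |B i k|) := by
            apply Finset.sum_le_sum
            intro i _
            simp only [Matrix.add_apply, Matrix.smul_apply, smul_eq_mul]
            calc |a * A i k + b * B i k| ≤ |a * A i k| + |b * B i k| := abs_add_le _ _
              _ = a * |A i k| + b * |B i k| := by
                  rw [abs_mul, abs_mul, abs_of_nonneg ha, abs_of_nonneg hb]
        _ = a * ∑ i, |A i k| + b * ∑ i, |B i k| := by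
            rw [Finset.sum_add_distrib, Finset.mul_sum, Finset.mul_sum]
        _ ≤ a * 1 + b * 1 := by
            have := hA.1 k; have := hB.1 k
            gcongr
        _ = 1 := by linarith
    · intro l
      calc ∑ j, |(a • A + b • B) l j| ≤ ∑ j, (a * |A l j| + b * |B l j|) := by
            apply Finset.sum_le_sum
            intro j _
            simp only [Matrix.add_apply, Matrix.smul_apply, smul_eq_mul]
            calc |a * A l j + b * B l j| ≤ |a * A l j| + |b * B l j| := abs_add_le _ _
              _ = a * |A l j| + b * |B l j| := by
                  rw [abs_mul, abs_mul, abs_of_nonneg ha, abs_of_nonneg hb]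
        _ = a * ∑ j, |A l j| + b * ∑ j, |B l j| := by
            rw [Finset.sum_add_distrib, Finset.mul_sum, Finset.mul_sum]
        _ ≤ a * 1 + b * 1 := by
            have := hA.2 l; have := hB.2 l
            gcongr
        _ = 1 := by linarith
  have hSPsubK : SP ⊆ K := by
    rintro A ⟨σ, ε, hε, rfl⟩
    have habs : ∀ j, |ε j| = 1 := by
      intro j; rcases hε j with h | h <;> simp [h]
    constructor
    · intro k
      have : ∑ i, |(Matrix.of fun i j => if i = σ j then ε j else 0) i k| = |ε k| := by
        rw [Finset.sum_eq_single (σ k)]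
        · simp
        · intro b _ hb
          simp [Matrix.of_apply, hb]
        · intro h; exact absurd (Finset.mem_univ _) h
      rw [this, habs]
    · intro l
      have : ∑ j, |(Matrix.of fun i j => if i = σ j then ε j else 0) l j| = |ε (σ.symm l)| := by
        rw [Finset.sum_eq_single (σ.symm l)]
        · simp
        · intro b _ hb
          have : l ≠ σ b := by
            intro h; apply hb; rw [h]; simp
          simp [Matrix.of_apply, this]
        · intro h; exact absurd (Finset.mem_univ _) h
      rw [this, habs]
  apply Set.Subset.antisymm
  · -- hard direction
    intro A hA
    obtain ⟨hAcol, hArow⟩ := hA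
    -- dominate |A| by a doubly stochastic matrix
    obtain ⟨S, hS, hSge⟩ := exists_doublyStochastic_ge p _ (fun i j => |A i j|) le_rfl
      (fun i j => abs_nonneg _) hArow hAcol
    have hS0 : ∀ i j, (0:ℝ) ≤ S i j := fun i j => nonneg_of_mem_doublyStochastic hS
    -- A lies in the box ∏ [-S i j, S i j]
    have hbox : A ∈ convexHull ℝ (Set.univ.pi fun i : Fin p =>
        Set.univ.pi fun j : Fin p => ({-S i j, S i j} : Set ℝ)) := by
      apply mem_convexHull_pi
      intro i _
      rw [convexHull_pi]
      intro j _
      show A i j ∈ convexHull ℝ ({-S i j, S i j} : Set ℝ)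
      rw [convexHull_pair,
        segment_eq_Icc (by linarith [hS0 i j] : -S i j ≤ S i j)]
      exact abs_le.mp (hSge i j)
    -- every vertex of the box is in the convex hull of signed permutations
    have hboxsub : (Set.univ.pi fun i : Fin p =>
        Set.univ.pi fun j : Fin p => ({-S i j, S i j} : Set ℝ)) ⊆ convexHull ℝ SP := by
      intro B hB
      have hBij : ∀ i j, B i j = -S i j ∨ B i j = S i j := by
        intro i j
        have h1 := hB i (Set.mem_univ i)
        have h2 := h1 j (Set.mem_univ j)
        simpa [Set.mem_insert_iff] using h2
      set ε : Fin p → Fin p → ℝ := fun i j => if B i j = S i j then 1 else -1 with hεdef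
      have hεval : ∀ i j, ε i j = 1 ∨ ε i j = -1 := by
        intro i j; simp only [hεdef]; split_ifs <;> simp
      have hBε : ∀ i j, B i j = ε i j * S i j := by
        intro i j
        simp only [hεdef]
        split_ifs with h
        · rw [h]; ring
        · rcases hBij i j with h' | h'
          · rw [h']; ring
          · exact absurd h' h
      set L : Matrix (Fin p) (Fin p) ℝ →ₗ[ℝ] Matrix (Fin p) (Fin p) ℝ :=
        { toFun := fun M => Matrix.of fun i j => ε i j * M i j
          map_add' := by
            intro M N; ext i j; simp [Matrix.add_apply, mul_add]
          map_smul' := by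
            intro c M; ext i j; simp [Matrix.smul_apply, smul_eq_mul]; ring } with hLdef
      have hBLS : B = L S := by
        ext i j; exact hBε i j
      have hSmem : S ∈ convexHull ℝ {σ.permMatrix ℝ | σ : Equiv.Perm (Fin p)} := by
        rw [← doublyStochastic_eq_convexHull_permMatrix]; exact hS
      have : L S ∈ convexHull ℝ (L '' {σ.permMatrix ℝ | σ : Equiv.Perm (Fin p)}) := by
        rw [← L.image_convexHull]
        exact Set.mem_image_of_mem _ hSmem
      rw [hBLS]
      refine convexHull_mono ?_ this
      rintro _ ⟨_, ⟨σ, rfl⟩, rfl⟩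
      refine ⟨σ.symm, fun j => ε (σ.symm j) j, fun j => hεval _ _, ?_⟩
      ext i j
      simp only [hLdef, LinearMap.coe_mk, AddHom.coe_mk, Matrix.of_apply,
        Equiv.Perm.permMatrix, PEquiv.toMatrix_apply, Equiv.toPEquiv_apply]
      by_cases h : i = σ.symm j
      · subst h
        simp
      · have h2 : ¬ (j ∈ (some (σ i))) := by
          simp only [Option.mem_def, Option.some.injEq]
          intro hh
          apply h
          rw [← hh]; simp
        simp only [h2, h, ↓reduceIte]
        ring
    exact convexHull_min (E := Matrix (Fin p) (Fin p) ℝ) hboxsub (convex_convexHull ℝ SP) hbox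
  · exact convexHull_min hSPsubK hKconvex
end

section
/- Let A be a real p×q matrix (p ≤ q) and let λ = (λ_1,…,λ_p) be the vector of its singular values. Then the vector of diagonal entries (a_{11}, a_{22}, …, a_{pp}) lies in the convex hull of the W_p-orbit of λ. -/
open Finset Matrix



/-- Completion of a doubly substochastic nonnegative matrix to a doubly stochastic one. -/
lemma exists_doublyStochastic_entry_le {p : ℕ} (D : Matrix (Fin p) (Fin p) ℝ)
    (hpos : ∀ i k, 0 ≤ D i k) (hrow : ∀ i, ∑ k, D i k ≤ 1) (hcol : ∀ k, ∑ i, D i k ≤ 1) :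
    ∃ D' ∈ doublyStochastic ℝ (Fin p), ∀ i k, D i k ≤ D' i k := by
  set r : Fin p → ℝ := fun i => 1 - ∑ k, D i k with hr
  set c : Fin p → ℝ := fun k => 1 - ∑ i, D i k with hc
  have hrpos : ∀ i, 0 ≤ r i := fun i => by simp [hr]; linarith [hrow i]
  have hcpos : ∀ k, 0 ≤ c k := fun k => by simp [hc]; linarith [hcol k]
  set s : ℝ := ∑ i, r i with hs
  have hsc : ∑ k, c k = s := by
    simp only [hs, hr, hc, Finset.sum_sub_distrib]
    rw [Finset.sum_comm]
  rcases eq_or_ne s 0 with h0 | h0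
  · have hr0 : ∀ i, r i = 0 := by
      intro i
      have h0' : ∑ i, r i = 0 := by rw [← hs]; exact h0
      exact (Finset.sum_eq_zero_iff_of_nonneg (fun i _ => hrpos i)).1 h0' i (mem_univ i)
    have hc0 : ∀ k, c k = 0 := by
      intro k
      have := (Finset.sum_eq_zero_iff_of_nonneg (fun k _ => hcpos k)).1 (hsc.trans h0)
      exact this k (mem_univ k)
    refine ⟨D, ?_, fun i k => le_refl _⟩
    rw [mem_doublyStochastic_iff_sum]
    refine ⟨hpos, fun i => ?_, fun k => ?_⟩
    · have := hr0 i; simp [hr] at this; linarith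
    · have := hc0 k; simp [hc] at this; linarith
  · have hspos : 0 < s := lt_of_le_of_ne (Finset.sum_nonneg fun i _ => hrpos i) (Ne.symm h0)
    refine ⟨fun i k => D i k + r i * c k / s, ?_, fun i k => ?_⟩
    · refine mem_doublyStochastic_iff_sum.mpr ?_
      refine ⟨fun i k => add_nonneg (hpos i k)
        (div_nonneg (mul_nonneg (hrpos i) (hcpos k)) hspos.le), fun i => ?_, fun k => ?_⟩
      · rw [Finset.sum_add_distrib]
        have : ∑ k, r i * c k / s = r i := by
          rw [← Finset.sum_div, ← Finset.mul_sum, hsc, mul_div_assoc, div_self h0, mul_one]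
        rw [this, hr]; ring
      · rw [Finset.sum_add_distrib]
        have : ∑ i, r i * c k / s = c k := by
          rw [← Finset.sum_div, ← Finset.sum_mul, ← hs, mul_comm, mul_div_assoc, div_self h0,
            mul_one]
        rw [this, hc]; ring
    · nlinarith [div_nonneg (mul_nonneg (hrpos i) (hcpos k)) hspos.le]



/-- Bessel-type inequality for a finite "orthonormal-with-zeros" family. -/
lemma bessel_aux {p q : ℕ} (y : Fin p → Fin q → ℝ) (κ : Fin p → ℝ) (hκ : ∀ k, κ k ≤ 1)
    (hy : ∀ k l, ∑ j, y k j * y l j = if k = l then κ k else 0) (j : Fin q) :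
    ∑ k, (y k j) ^ 2 ≤ 1 := by
  set S : Fin q → ℝ := fun j' => ∑ k, y k j * y k j' with hS
  have h1 : S j = ∑ k, (y k j) ^ 2 := by
    simp only [hS]
    exact Finset.sum_congr rfl fun k _ => (sq (y k j)).symm ▸ rfl
  have hinner : ∀ k l, ∑ j', (y k j * y k j') * (y l j * y l j')
      = y k j * y l j * (if k = l then κ k else 0) := by
    intro k l
    rw [← hy k l, Finset.mul_sum]
    exact Finset.sum_congr rfl fun j' _ => by ring
  have h2 : ∑ j', (S j') ^ 2 = ∑ k, κ k * (y k j) ^ 2 := by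
    calc ∑ j', (S j') ^ 2
        = ∑ j', ∑ k, ∑ l, (y k j * y k j') * (y l j * y l j') := by
          refine Finset.sum_congr rfl fun j' _ => ?_
          rw [sq, hS, Finset.sum_mul_sum]
      _ = ∑ k, ∑ l, ∑ j', (y k j * y k j') * (y l j * y l j') := by
          rw [Finset.sum_comm]
          refine Finset.sum_congr rfl fun k _ => ?_
          rw [Finset.sum_comm]
      _ = ∑ k, ∑ l, y k j * y l j * (if k = l then κ k else 0) := by
          exact Finset.sum_congr rfl fun k _ => Finset.sum_congr rfl fun l _ => hinner k l
      _ = ∑ k, κ k * (y k j) ^ 2 := by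
          refine Finset.sum_congr rfl fun k _ => ?_
          simp [mul_ite, Finset.sum_ite_eq, sq]
          ring
  have key : (0:ℝ) ≤ ∑ j', ((if j = j' then (1:ℝ) else 0) - S j') ^ 2 :=
    Finset.sum_nonneg fun _ _ => sq_nonneg _
  have expand : ∑ j', ((if j = j' then (1:ℝ) else 0) - S j') ^ 2
      = 1 - 2 * S j + ∑ j', (S j') ^ 2 := by
    have hterm : ∀ j', ((if j = j' then (1:ℝ) else 0) - S j') ^ 2
        = (if j = j' then (1:ℝ) - 2 * S j' else 0) + (S j') ^ 2 := by
      intro j'; split <;> ring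
    rw [Finset.sum_congr rfl fun j' _ => hterm j', Finset.sum_add_distrib]
    simp [Finset.sum_ite_eq]
  have hcmp : ∑ k, κ k * (y k j) ^ 2 ≤ ∑ k, (y k j) ^ 2 :=
    Finset.sum_le_sum fun k _ => by nlinarith [sq_nonneg (y k j), hκ k]
  rw [expand, h2] at key
  rw [← h1]
  linarith [h1 ▸ hcmp]

lemma WOrbit_finite {p : ℕ} (v : Fin p → ℝ) : (WOrbit v).Finite := by
  have hsub : WOrbit v ⊆ Set.range (fun sb : Equiv.Perm (Fin p) × (Fin p → Bool) =>
      fun i => (if sb.2 i then (1:ℝ) else -1) * v (sb.1 i)) := by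
    rintro w ⟨σ, ε, hε, rfl⟩
    refine ⟨⟨σ, fun i => ε i = 1⟩, ?_⟩
    funext i
    rcases hε i with h | h <;> simp [h]
    exact fun h1 => absurd h1 (by norm_num)
  exact Set.Finite.subset (Set.finite_range _) hsub

lemma WOrbit_comp {p : ℕ} (v : Fin p → ℝ) (e : Equiv.Perm (Fin p)) :
    WOrbit (fun i => v (e i)) = WOrbit v := by
  ext w
  constructor
  · rintro ⟨σ, ε, hε, rfl⟩
    exact ⟨σ.trans e, ε, hε, rfl⟩
  · rintro ⟨σ, ε, hε, rfl⟩
    refine ⟨σ.trans e.symm, ε, hε, ?_⟩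
    funext i
    simp

open Finset in
lemma key_hull {p : ℕ} (μ : Fin p → ℝ) (hμ : ∀ k, 0 ≤ μ k) (M : Matrix (Fin p) (Fin p) ℝ)
    (hrow : ∀ i, ∑ k, |M i k| ≤ 1) (hcol : ∀ k, ∑ i, |M i k| ≤ 1) :
    (fun i => ∑ k, M i k * μ k) ∈ convexHull ℝ (WOrbit μ) := by
  by_contra hd
  have hclosed : IsClosed (convexHull ℝ (WOrbit μ)) :=
    ((WOrbit_finite μ).isCompact_convexHull (𝕜 := ℝ)).isClosed
  obtain ⟨f, u, hfu, huf⟩ :=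
    geometric_hahn_banach_closed_point (convex_convexHull ℝ _) hclosed hd
  set x : Fin p → ℝ := fun i => f (Pi.single i 1) with hx
  have hf : ∀ v : Fin p → ℝ, f v = ∑ i, v i * x i := by
    intro v
    have hv : v = ∑ i, v i • (Pi.single i 1 : Fin p → ℝ) := by
      funext j
      rw [Finset.sum_apply]
      simp [Pi.single_apply, eq_comm]
    conv_lhs => rw [hv]
    rw [map_sum]
    exact Finset.sum_congr rfl fun i _ => by rw [_root_.map_smul]; simp [hx, smul_eq_mul]
  obtain ⟨D', hD'mem, hle⟩ := exists_doublyStochastic_entry_le (fun i k => |M i k|)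
    (fun i k => abs_nonneg _) hrow hcol
  obtain ⟨w, hw0, hw1, hwsum⟩ := exists_eq_sum_perm_of_mem_doublyStochastic hD'mem
  set F : Matrix (Fin p) (Fin p) ℝ → ℝ := fun P => ∑ i, ∑ k, |x i| * P i k * μ k with hF
  have hFperm : ∀ σ : Equiv.Perm (Fin p), F (σ.permMatrix ℝ) = ∑ i, |x i| * μ (σ i) := by
    intro σ
    refine Finset.sum_congr rfl fun i _ => ?_
    simp [Equiv.Perm.permMatrix, PEquiv.toMatrix_apply, Equiv.toPEquiv_apply, mul_ite, ite_mul,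
      Finset.sum_ite_eq]
  have hFD' : F D' = ∑ σ : Equiv.Perm (Fin p), w σ * F (σ.permMatrix ℝ) := by
    have entry : ∀ i k, D' i k = ∑ σ : Equiv.Perm (Fin p), w σ * σ.permMatrix ℝ i k := by
      intro i k
      rw [← hwsum]
      simp [Matrix.sum_apply]
    calc F D' = ∑ i, ∑ k, ∑ σ : Equiv.Perm (Fin p), w σ * (|x i| * σ.permMatrix ℝ i k * μ k) := by
          refine Finset.sum_congr rfl fun i _ => Finset.sum_congr rfl fun k _ => ?_
          rw [entry i k, Finset.mul_sum, Finset.sum_mul]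
          exact Finset.sum_congr rfl fun σ _ => by ring
      _ = ∑ i, ∑ σ : Equiv.Perm (Fin p), ∑ k, w σ * (|x i| * σ.permMatrix ℝ i k * μ k) :=
          Finset.sum_congr rfl fun i _ => Finset.sum_comm
      _ = ∑ σ : Equiv.Perm (Fin p), ∑ i, ∑ k, w σ * (|x i| * σ.permMatrix ℝ i k * μ k) :=
          Finset.sum_comm
      _ = ∑ σ : Equiv.Perm (Fin p), w σ * F (σ.permMatrix ℝ) := by
          refine Finset.sum_congr rfl fun σ _ => ?_
          rw [hF, Finset.mul_sum]
          exact Finset.sum_congr rfl fun i _ => (Finset.mul_sum _ _ _).symm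
  obtain ⟨σ₀, -, hσ₀⟩ := Finset.exists_max_image (Finset.univ : Finset (Equiv.Perm (Fin p)))
    (fun σ => F (σ.permMatrix ℝ)) ⟨1, Finset.mem_univ 1⟩
  have hFmax : F D' ≤ F (σ₀.permMatrix ℝ) := by
    rw [hFD']
    calc ∑ σ : Equiv.Perm (Fin p), w σ * F (σ.permMatrix ℝ)
        ≤ ∑ σ : Equiv.Perm (Fin p), w σ * F (σ₀.permMatrix ℝ) :=
          Finset.sum_le_sum fun σ _ =>
            mul_le_mul_of_nonneg_left (hσ₀ σ (Finset.mem_univ σ)) (hw0 σ)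
      _ = F (σ₀.permMatrix ℝ) := by rw [← Finset.sum_mul, hw1, one_mul]
  set ε : Fin p → ℝ := fun i => if 0 ≤ x i then 1 else -1 with hε
  have hεx : ∀ i, ε i * x i = |x i| := by
    intro i
    rw [hε]
    dsimp only
    split
    · rw [one_mul, abs_of_nonneg ‹_›]
    · rw [abs_of_neg (lt_of_not_ge ‹_›)]; ring
  have hwmem : (fun i => ε i * μ (σ₀ i)) ∈ WOrbit μ := by
    refine ⟨σ₀, ε, fun i => ?_, rfl⟩
    rw [hε]; dsimp only; split
    · exact Or.inl rfl
    · exact Or.inr rfl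
  have hchain : f (fun i => ∑ k, M i k * μ k) ≤ f (fun i => ε i * μ (σ₀ i)) := by
    rw [hf, hf]
    calc ∑ i, (∑ k, M i k * μ k) * x i
        = ∑ i, ∑ k, M i k * μ k * x i := by
          exact Finset.sum_congr rfl fun i _ => Finset.sum_mul _ _ _
      _ ≤ ∑ i, ∑ k, |x i| * |M i k| * μ k := by
          refine Finset.sum_le_sum fun i _ => Finset.sum_le_sum fun k _ => ?_
          calc M i k * μ k * x i ≤ |M i k * μ k * x i| := le_abs_self _
            _ = |x i| * |M i k| * μ k := by
              rw [abs_mul, abs_mul, abs_of_nonneg (hμ k)]; ring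
      _ ≤ ∑ i, ∑ k, |x i| * D' i k * μ k :=
          Finset.sum_le_sum fun i _ => Finset.sum_le_sum fun k _ =>
            mul_le_mul_of_nonneg_right
              (mul_le_mul_of_nonneg_left (hle i k) (abs_nonneg _)) (hμ k)
      _ = F D' := rfl
      _ ≤ F (σ₀.permMatrix ℝ) := hFmax
      _ = ∑ i, |x i| * μ (σ₀ i) := hFperm σ₀
      _ = ∑ i, (ε i * μ (σ₀ i)) * x i := by
          refine Finset.sum_congr rfl fun i _ => ?_
          rw [← hεx i]; ring
  have h1 : f (fun i => ε i * μ (σ₀ i)) < u :=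
    hfu _ (subset_convexHull ℝ _ hwmem)
  linarith

/-- For a real `p × q` matrix `A` (`p ≤ q`) with singular values `λ`, the vector of diagonal
entries `(a_{11}, …, a_{pp})` lies in the convex hull of the `W_p`-orbit of `λ`. -/
theorem diag_mem_convexHull_WOrbit_singularValues (p q : ℕ) (hpq : p ≤ q)
    (A : Matrix (Fin p) (Fin q) ℝ) :
    (fun i : Fin p => A i (Fin.castLE hpq i)) ∈
      convexHull ℝ (WOrbit (matSingVals A)) := by
  have hH := Matrix.isHermitian_mul_conjTranspose_self A
  set ν : Fin p → ℝ := hH.eigenvalues with hνdef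
  set W : Matrix (Fin p) (Fin p) ℝ := (hH.eigenvectorUnitary : Matrix (Fin p) (Fin p) ℝ)
    with hWdef
  have hν0 : ∀ k, 0 ≤ ν k := fun k => Matrix.eigenvalues_self_mul_conjTranspose_nonneg A k
  have hWW : W * star W = 1 := Matrix.mem_unitaryGroup_iff.mp hH.eigenvectorUnitary.2
  have hWW' : star W * W = 1 := Matrix.mem_unitaryGroup_iff'.mp hH.eigenvectorUnitary.2
  set B : Matrix (Fin p) (Fin q) ℝ := star W * A with hBdef
  have hBB : B * Bᴴ = Matrix.diagonal ν := by
    have h1 : B * Bᴴ = star W * (A * Aᴴ) * W := by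
      rw [hBdef, Matrix.conjTranspose_mul, Matrix.star_eq_conjTranspose,
        Matrix.conjTranspose_conjTranspose]
      rw [← Matrix.mul_assoc, Matrix.mul_assoc Wᴴ A Aᴴ]
    have hd := hH.conjStarAlgAut_star_eigenvectorUnitary
    rw [Unitary.conjStarAlgAut_apply, Unitary.coe_star, star_star] at hd
    rw [h1, hd]
    congr 1
  -- entrywise versions
  have hB : ∀ k l, ∑ j, B k j * B l j = if k = l then ν k else 0 := by
    intro k l
    have h := congrFun (congrFun hBB k) l
    simp only [Matrix.mul_apply, Matrix.conjTranspose_apply, star_trivial,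
      Matrix.diagonal_apply] at h
    exact h
  have hArec : ∀ i j, A i j = ∑ k, W i k * B k j := by
    intro i j
    have hWB : A = W * B := by rw [hBdef, ← Matrix.mul_assoc, hWW, Matrix.one_mul]
    conv_lhs => rw [hWB]
    rw [Matrix.mul_apply]
  have hWrow : ∀ i, ∑ k, W i k ^ 2 = 1 := by
    intro i
    have h := congrFun (congrFun hWW i) i
    simp only [Matrix.mul_apply, Matrix.star_apply, star_trivial, Matrix.one_apply_eq] at h
    rw [← h]
    exact Finset.sum_congr rfl fun k _ => sq (W i k)
  have hWcol : ∀ k, ∑ i, W i k ^ 2 = 1 := by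
    intro k
    have h := congrFun (congrFun hWW' k) k
    simp only [Matrix.mul_apply, Matrix.star_apply, star_trivial, Matrix.one_apply_eq] at h
    rw [← h]
    exact Finset.sum_congr rfl fun i _ => sq (W i k)
  set μ : Fin p → ℝ := fun k => Real.sqrt (ν k) with hμdef
  have hμ0 : ∀ k, 0 ≤ μ k := fun k => Real.sqrt_nonneg _
  set y : Fin p → Fin q → ℝ := fun k j => B k j / μ k with hydef
  have hB0 : ∀ k, ν k = 0 → ∀ j, B k j = 0 := by
    intro k hk j
    have h := hB k k
    rw [if_pos rfl, hk] at h
    have h2 := (Finset.sum_eq_zero_iff_of_nonneg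
      (fun j _ => mul_self_nonneg (B k j))).1 h j (Finset.mem_univ j)
    exact mul_self_eq_zero.mp h2
  have hμy : ∀ k j, μ k * y k j = B k j := by
    intro k j
    rcases eq_or_ne (ν k) 0 with h | h
    · rw [hB0 k h j, hydef]
      simp [hB0 k h j]
    · have hμne : μ k ≠ 0 := by
        rw [hμdef]
        simpa using Real.sqrt_ne_zero'.mpr (lt_of_le_of_ne (hν0 k) (Ne.symm h))
      rw [hydef]
      field_simp
  have hyy : ∀ k l, ∑ j, y k j * y l j = if k = l then (if ν k = 0 then 0 else 1) else 0 := by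
    intro k l
    have hdiv : ∑ j, y k j * y l j = (∑ j, B k j * B l j) / (μ k * μ l) := by
      rw [Finset.sum_div]
      refine Finset.sum_congr rfl fun j _ => ?_
      rw [hydef]
      exact div_mul_div_comm _ _ _ _
    rw [hdiv, hB]
    rcases eq_or_ne k l with rfl | hkl
    · rw [if_pos rfl, if_pos rfl]
      rcases eq_or_ne (ν k) 0 with h | h
      · rw [if_pos h, h, zero_div]
      · rw [if_neg h, hμdef]
        rw [Real.mul_self_sqrt (hν0 k)]
        exact div_self h
    · rw [if_neg hkl, if_neg hkl, zero_div]
  have hκle : ∀ k, (if ν k = 0 then (0:ℝ) else 1) ≤ 1 := by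
    intro k; split <;> norm_num
  have hycol : ∀ j, ∑ k, (y k j) ^ 2 ≤ 1 :=
    bessel_aux y (fun k => if ν k = 0 then 0 else 1) hκle hyy
  have hyrow : ∀ k, ∑ j, (y k j) ^ 2 ≤ 1 := by
    intro k
    have h := hyy k k
    rw [if_pos rfl] at h
    calc ∑ j, (y k j) ^ 2 = ∑ j, y k j * y k j := Finset.sum_congr rfl fun j _ => sq (y k j)
      _ = if ν k = 0 then 0 else 1 := h
      _ ≤ 1 := hκle k
  -- the matrix M
  set M : Matrix (Fin p) (Fin p) ℝ := fun i k => W i k * y k (Fin.castLE hpq i) with hMdef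
  have hdiag : (fun i : Fin p => A i (Fin.castLE hpq i)) = fun i => ∑ k, M i k * μ k := by
    funext i
    rw [hArec i (Fin.castLE hpq i)]
    refine Finset.sum_congr rfl fun k _ => ?_
    rw [hMdef, ← hμy k (Fin.castLE hpq i)]
    ring
  have hrow : ∀ i, ∑ k, |M i k| ≤ 1 := by
    intro i
    have hcs := Finset.sum_mul_sq_le_sq_mul_sq Finset.univ
      (fun k => |W i k|) (fun k => |y k (Fin.castLE hpq i)|)
    have h1 : ∑ k, |W i k| ^ 2 = 1 := by
      rw [← hWrow i]
      exact Finset.sum_congr rfl fun k _ => sq_abs _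
    have h2 : ∑ k, |y k (Fin.castLE hpq i)| ^ 2 ≤ 1 := by
      rw [Finset.sum_congr rfl fun k (_ : k ∈ Finset.univ) => sq_abs (y k (Fin.castLE hpq i))]
      exact hycol _
    have heq : ∑ k, |M i k| = ∑ k, |W i k| * |y k (Fin.castLE hpq i)| := by
      refine Finset.sum_congr rfl fun k _ => ?_
      rw [hMdef, abs_mul]
    have hnn : 0 ≤ ∑ k, |M i k| := Finset.sum_nonneg fun k _ => abs_nonneg _
    rw [heq] at hnn ⊢
    nlinarith [hcs, h1, h2, hnn]
  have hcol : ∀ k, ∑ i, |M i k| ≤ 1 := by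
    intro k
    have hcs := Finset.sum_mul_sq_le_sq_mul_sq Finset.univ
      (fun i => |W i k|) (fun i => |y k (Fin.castLE hpq i)|)
    have h1 : ∑ i, |W i k| ^ 2 = 1 := by
      rw [← hWcol k]
      exact Finset.sum_congr rfl fun i _ => sq_abs _
    have h2 : ∑ i, |y k (Fin.castLE hpq i)| ^ 2 ≤ 1 := by
      have hsub : ∑ i, (y k (Fin.castLE hpq i)) ^ 2 ≤ ∑ j, (y k j) ^ 2 := by
        calc ∑ i, (y k (Fin.castLE hpq i)) ^ 2
            = ∑ j ∈ Finset.univ.image (Fin.castLE hpq), (y k j) ^ 2 := by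
              rw [Finset.sum_image fun a _ b _ h => Fin.castLE_injective hpq h]
          _ ≤ ∑ j, (y k j) ^ 2 :=
              Finset.sum_le_sum_of_subset_of_nonneg (Finset.subset_univ _)
                fun j _ _ => sq_nonneg _
      calc ∑ i, |y k (Fin.castLE hpq i)| ^ 2 = ∑ i, (y k (Fin.castLE hpq i)) ^ 2 :=
            Finset.sum_congr rfl fun i _ => sq_abs _
        _ ≤ ∑ j, (y k j) ^ 2 := hsub
        _ ≤ 1 := hyrow k
    have heq : ∑ i, |M i k| = ∑ i, |W i k| * |y k (Fin.castLE hpq i)| := by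
      refine Finset.sum_congr rfl fun i _ => ?_
      rw [hMdef, abs_mul]
    have hnn : 0 ≤ ∑ i, |M i k| := Finset.sum_nonneg fun i _ => abs_nonneg _
    rw [heq] at hnn ⊢
    nlinarith [hcs, h1, h2, hnn]
  have hmem := key_hull μ hμ0 M hrow hcol
  have horb : WOrbit (matSingVals A) = WOrbit μ := by
    have h1 : matSingVals A = fun i => μ ((Fin.revPerm.trans (Tuple.sort μ)) i) := rfl
    rw [h1, WOrbit_comp]
  rw [hdiag, horb]
  exact hmem
end

section
/- Let L(s) = L_a(s) be an H-curve in Gr_{p,q} with invariants 0 ≤ a_1 ≤ … ≤ a_p. If s_1 < s_2 < s_3 and a_p(s_3 − s_1) ≤ π/2 (so that all three points are pairwise sufficiently near), then for every j = 1,…,p: Ψ_j[L(s_1), L(s_2)] + Ψ_j[L(s_2), L(s_3)] = Ψ_j[L(s_1), L(s_3)]. -/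
open Module Submodule Real Set
open scoped RealInnerProductSpace

section Aux

open Polynomial Matrix

private lemma myCharpoly_conj {p : ℕ} (P A Q : Matrix (Fin p) (Fin p) ℝ)
    (hPQ : P * Q = 1) : (P * A * Q).charpoly = A.charpoly := by
  have hmap : ∀ M N : Matrix (Fin p) (Fin p) ℝ,
      (M * N).map (Polynomial.C : ℝ →+* Polynomial ℝ) = M.map Polynomial.C * N.map Polynomial.C :=
    fun M N => Matrix.map_mul
  have key : charmatrix (P * A * Q) =
      P.map (Polynomial.C : ℝ →+* Polynomial ℝ) * charmatrix A * Q.map Polynomial.C := by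
    unfold charmatrix
    rw [Matrix.mul_sub, Matrix.sub_mul]
    congr 1
    · have hscalar : (Matrix.scalar (Fin p) (X : Polynomial ℝ)) = (X : Polynomial ℝ) • 1 := by
        ext i j
        simp [Matrix.scalar_apply, Matrix.smul_apply, Matrix.one_apply, Matrix.diagonal_apply]
      rw [hscalar, Matrix.mul_smul, Matrix.mul_one, Matrix.smul_mul, ← hmap, hPQ]
      simp
    · simp only [RingHom.mapMatrix_apply]
      rw [hmap, hmap]
  unfold Matrix.charpoly
  rw [key, Matrix.det_mul, Matrix.det_mul]
  have : ((P.map (Polynomial.C : ℝ →+* Polynomial ℝ)).det) *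
      ((Q.map (Polynomial.C : ℝ →+* Polynomial ℝ)).det) = 1 := by
    rw [← Matrix.det_mul, ← hmap, hPQ]
    simp
  calc (P.map (Polynomial.C : ℝ →+* Polynomial ℝ)).det * (charmatrix A).det *
        (Q.map (Polynomial.C : ℝ →+* Polynomial ℝ)).det
      = (charmatrix A).det * ((P.map (Polynomial.C : ℝ →+* Polynomial ℝ)).det *
        (Q.map (Polynomial.C : ℝ →+* Polynomial ℝ)).det) := by ring
    _ = (charmatrix A).det := by rw [this, mul_one]

private lemma myCharpoly_diagonal {p : ℕ} (d : Fin p → ℝ) :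
    (Matrix.diagonal d).charpoly = ∏ i, (X - Polynomial.C (d i)) := by
  unfold Matrix.charpoly
  have : charmatrix (Matrix.diagonal d) = Matrix.diagonal (fun i => X - Polynomial.C (d i)) := by
    ext i j
    by_cases h : i = j
    · subst h; simp
    · simp [charmatrix_apply, Matrix.diagonal_apply_ne _ h]
  rw [this, Matrix.det_diagonal]

private lemma myHermitian_charpoly {p : ℕ} {A : Matrix (Fin p) (Fin p) ℝ} (hA : A.IsHermitian) :
    A.charpoly = ∏ i, (X - Polynomial.C (hA.eigenvalues i)) := by
  have hU := (Matrix.IsHermitian.eigenvectorUnitary hA).prop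
  rw [Unitary.mem_iff] at hU
  conv_lhs => rw [hA.spectral_theorem, Unitary.conjStarAlgAut_apply]
  rw [myCharpoly_conj _ _ _ hU.2]
  have : (RCLike.ofReal ∘ hA.eigenvalues : Fin p → ℝ) = hA.eigenvalues := by
    funext i; simp [RCLike.ofReal]
  rw [this, myCharpoly_diagonal]

private lemma myOfFn_perm_of_prod_eq {n : ℕ} (α β : Fin n → ℝ)
    (h : ∏ i, (X - Polynomial.C (α i)) = ∏ i, (X - Polynomial.C (β i))) :
    (List.ofFn α).Perm (List.ofFn β) := by
  have hr : ∀ γ : Fin n → ℝ,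
      (∏ i, (X - Polynomial.C (γ i))).roots = (List.ofFn γ : Multiset ℝ) := by
    intro γ
    have h1 : ∏ i, (X - Polynomial.C (γ i)) =
        ((List.ofFn γ : Multiset ℝ).map fun a => X - Polynomial.C a).prod := by
      rw [Multiset.map_coe, List.map_ofFn, Multiset.prod_coe, List.prod_ofFn]
      rfl
    rw [h1, Polynomial.roots_multiset_prod_X_sub_C]
  have := (hr α).symm.trans (by rw [h, hr β])
  exact Multiset.coe_eq_coe.mp this

private lemma mySortDesc_eq {n : ℕ} {v w : Fin n → ℝ}
    (hperm : (List.ofFn v).Perm (List.ofFn w)) (hw : Antitone w) : sortDesc v = w := by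
  have hmono1 : Monotone (v ∘ Tuple.sort v) := Tuple.monotone_sort v
  have hmono2 : Monotone (w ∘ (Fin.revPerm : Equiv.Perm (Fin n))) := by
    intro i j hij
    exact hw (Fin.rev_le_rev.mpr hij)
  have hp : (List.ofFn (v ∘ Tuple.sort v)).Perm
      (List.ofFn (w ∘ (Fin.revPerm : Equiv.Perm (Fin n)))) :=
    ((Equiv.Perm.ofFn_comp_perm (Tuple.sort v) v).trans hperm).trans
      (Equiv.Perm.ofFn_comp_perm Fin.revPerm w).symm
  have heq : List.ofFn (v ∘ Tuple.sort v) = List.ofFn (w ∘ (Fin.revPerm : Equiv.Perm (Fin n))) :=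
    List.Perm.eq_of_sortedLE (hmono1.sortedLE_ofFn) (hmono2.sortedLE_ofFn) hp
  have hfun := List.ofFn_injective heq
  funext i
  have := congrFun hfun i.rev
  simpa [sortDesc, Fin.rev_rev] using this

private lemma myMatSingVals_eq {p : ℕ} (A Cm Dm : Matrix (Fin p) (Fin p) ℝ)
    (c : Fin p → ℝ) (hc0 : ∀ i, 0 ≤ c i) (hcanti : Antitone c)
    (hA : A = Cm * Matrix.diagonal c * Dmᵀ)
    (hC : Cm * Cmᵀ = 1) (hD : Dm * Dmᵀ = 1) :
    matSingVals A = c := by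
  have hconj : Aᴴ = Aᵀ := by
    ext i j; simp [Matrix.conjTranspose_apply]
  have hDtD : Dmᵀ * Dm = 1 := mul_eq_one_comm.mp hD
  have hB : A * Aᴴ = Cm * Matrix.diagonal (fun i => c i * c i) * Cmᵀ := by
    rw [hconj, hA]
    rw [Matrix.transpose_mul, Matrix.transpose_mul, Matrix.transpose_transpose,
      Matrix.diagonal_transpose]
    calc Cm * Matrix.diagonal c * Dmᵀ * (Dm * (Matrix.diagonal c * Cmᵀ))
        = Cm * Matrix.diagonal c * (Dmᵀ * Dm) * (Matrix.diagonal c * Cmᵀ) := by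
          simp only [Matrix.mul_assoc]
      _ = Cm * (Matrix.diagonal c * Matrix.diagonal c) * Cmᵀ := by
          rw [hDtD, Matrix.mul_one]; simp only [Matrix.mul_assoc]
      _ = Cm * Matrix.diagonal (fun i => c i * c i) * Cmᵀ := by
          rw [Matrix.diagonal_mul_diagonal]
  have hH := Matrix.isHermitian_mul_conjTranspose_self A
  have hchar : ∏ i, (X - Polynomial.C (hH.eigenvalues i)) =
      ∏ i, (X - Polynomial.C (c i * c i)) := by
    rw [← myHermitian_charpoly hH, hB, myCharpoly_conj _ _ _ hC, myCharpoly_diagonal]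
  have hperm := myOfFn_perm_of_prod_eq _ _ hchar
  have hperm2 : (List.ofFn fun i => Real.sqrt (hH.eigenvalues i)).Perm (List.ofFn c) := by
    have := hperm.map Real.sqrt
    rw [List.map_ofFn, List.map_ofFn] at this
    have hcc : (Real.sqrt ∘ fun i => c i * c i) = c := by
      funext i; simp [Function.comp, Real.sqrt_mul_self (hc0 i)]
    rwa [hcc] at this
  exact mySortDesc_eq hperm2 hcanti

private lemma myExpand {n p : ℕ} {v : Fin p → EuclideanSpace ℝ (Fin n)} (hv : Orthonormal ℝ v)
    {x : EuclideanSpace ℝ (Fin n)} (hx : x ∈ Submodule.span ℝ (Set.range v)) :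
    x = ∑ k, ⟪v k, x⟫ • v k := by
  obtain ⟨c, rfl⟩ := (mem_span_range_iff_exists_fun ℝ).mp hx
  simp [hv.inner_right_fintype]

private lemma myParseval {n p : ℕ} {v : Fin p → EuclideanSpace ℝ (Fin n)} (hv : Orthonormal ℝ v)
    {x y : EuclideanSpace ℝ (Fin n)} (hx : x ∈ Submodule.span ℝ (Set.range v)) :
    ⟪x, y⟫ = ∑ k, ⟪v k, x⟫ * ⟪v k, y⟫ := by
  conv_lhs => rw [myExpand hv hx]
  rw [sum_inner]
  simp only [real_inner_smul_left]

private lemma mySubSingVals (p q : ℕ) (a : Fin p → ℝ) (ha0 : ∀ j, 0 ≤ a j)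
    (hamono : Monotone a)
    (e f : Fin p → EuclideanSpace ℝ (Fin (p + q)))
    (horth : Orthonormal ℝ (Sum.elim e f))
    (s t : ℝ) (hst : s ≤ t) (hb : ∀ j, a j * (t - s) ≤ π / 2) :
    subSingVals p
      (Submodule.span ℝ (Set.range fun j : Fin p =>
        Real.cos (a j * s) • e j + Real.sin (a j * s) • f j))
      (Submodule.span ℝ (Set.range fun j : Fin p =>
        Real.cos (a j * t) • e j + Real.sin (a j * t) • f j))
      = fun j => Real.cos (a j * (t - s)) := by
  classical
  set v : ℝ → Fin p → EuclideanSpace ℝ (Fin (p + q)) :=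
    fun u j => Real.cos (a j * u) • e j + Real.sin (a j * u) • f j with hv
  -- inner products of curve vectors
  have horth' := orthonormal_iff_ite.mp horth
  have hinner : ∀ u r : ℝ, ∀ i j : Fin p,
      ⟪v u i, v r j⟫ = if i = j then Real.cos (a i * r - a i * u) else 0 := by
    intro u r i j
    have hee : ⟪e i, e j⟫ = if i = j then (1:ℝ) else 0 := by
      have := horth' (Sum.inl i) (Sum.inl j); simpa using this
    have hef : ⟪e i, f j⟫ = 0 := by
      have := horth' (Sum.inl i) (Sum.inr j); simpa using this
    have hfe : ⟪f i, e j⟫ = 0 := by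
      have := horth' (Sum.inr i) (Sum.inl j); simpa using this
    have hff : ⟪f i, f j⟫ = if i = j then (1:ℝ) else 0 := by
      have := horth' (Sum.inr i) (Sum.inr j); simpa using this
    show ⟪Real.cos (a i * u) • e i + Real.sin (a i * u) • f i,
      Real.cos (a j * r) • e j + Real.sin (a j * r) • f j⟫ = _
    rw [inner_add_left, inner_add_right, inner_add_right, real_inner_smul_left,
      real_inner_smul_left, real_inner_smul_left, real_inner_smul_left,
      real_inner_smul_right, real_inner_smul_right, real_inner_smul_right,
      real_inner_smul_right, hee, hef, hfe, hff]
    by_cases h : i = j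
    · subst h
      simp [Real.cos_sub]
      ring
    · simp [h]
  have hON : ∀ u : ℝ, Orthonormal ℝ (v u) := by
    intro u
    rw [orthonormal_iff_ite]
    intro i j
    rw [hinner u u i j]
    by_cases h : i = j <;> simp [h]
  -- nonnegativity and bound facts
  have hΔ : 0 ≤ t - s := by linarith
  have haΔ0 : ∀ j, 0 ≤ a j * (t - s) := fun j => mul_nonneg (ha0 j) hΔ
  set c : Fin p → ℝ := fun j => Real.cos (a j * (t - s)) with hc
  have hc0 : ∀ j, 0 ≤ c j := by
    intro j
    apply Real.cos_nonneg_of_mem_Icc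
    constructor
    · linarith [haΔ0 j, Real.pi_pos]
    · exact hb j
  have hcanti : Antitone c := by
    intro i j hij
    apply Real.cos_le_cos_of_nonneg_of_le_pi (haΔ0 i)
    · linarith [hb j, Real.pi_pos]
    · exact mul_le_mul_of_nonneg_right (hamono hij) hΔ
  -- the condition of the dite holds
  have hcond : (∃ g : Fin p → EuclideanSpace ℝ (Fin (p + q)), IsONBasisOf g
        (Submodule.span ℝ (Set.range fun j : Fin p =>
          Real.cos (a j * s) • e j + Real.sin (a j * s) • f j))) ∧
      (∃ g : Fin p → EuclideanSpace ℝ (Fin (p + q)), IsONBasisOf g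
        (Submodule.span ℝ (Set.range fun j : Fin p =>
          Real.cos (a j * t) • e j + Real.sin (a j * t) • f j))) :=
    ⟨⟨v s, hON s, rfl⟩, ⟨v t, hON t, rfl⟩⟩
  rw [subSingVals, dif_pos hcond]
  set e' := hcond.1.choose with he'def
  set f' := hcond.2.choose with hf'def
  have he' := hcond.1.choose_spec
  have hf' := hcond.2.choose_spec
  rw [← he'def] at he'
  rw [← hf'def] at hf'
  -- membership facts
  have he'mem : ∀ i, e' i ∈ Submodule.span ℝ (Set.range (v s)) := by
    intro i
    have hmem : e' i ∈ Submodule.span ℝ (Set.range e') := Submodule.subset_span ⟨i, rfl⟩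
    rw [he'.2] at hmem
    exact hmem
  have hf'mem : ∀ i, f' i ∈ Submodule.span ℝ (Set.range (v t)) := by
    intro i
    have hmem : f' i ∈ Submodule.span ℝ (Set.range f') := Submodule.subset_span ⟨i, rfl⟩
    rw [hf'.2] at hmem
    exact hmem
  set Cm : Matrix (Fin p) (Fin p) ℝ := Matrix.of fun i k => ⟪v s k, e' i⟫ with hCm
  set Dm : Matrix (Fin p) (Fin p) ℝ := Matrix.of fun j l => ⟪v t l, f' j⟫ with hDm
  have hcst : ∀ l k : Fin p, ⟪v t l, v s k⟫ = if l = k then c k else 0 := by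
    intro l k
    rw [hinner t s l k]
    by_cases h : l = k
    · subst h
      simp only [if_pos rfl]
      have harg : a l * s - a l * t = -(a l * (t - s)) := by ring
      rw [harg, Real.cos_neg]
    · simp [h]
  have hG : grammian e' f' = Cm * Matrix.diagonal c * Dmᵀ := by
    ext i j
    have h1 : grammian e' f' i j = ∑ k, Cm i k * ⟪v s k, f' j⟫ :=
      myParseval (hON s) (he'mem i)
    have h2 : ∀ k, ⟪v s k, f' j⟫ = Dm j k * c k := by
      intro k
      rw [real_inner_comm]
      rw [myParseval (hON t) (hf'mem j) (y := v s k)]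
      have : ∀ l, (⟪v t l, f' j⟫ : ℝ) * ⟪v t l, v s k⟫ =
          if l = k then Dm j l * c k else 0 := by
        intro l
        rw [hcst l k]
        by_cases h : l = k
        · subst h
          rw [if_pos rfl, if_pos rfl]
          rfl
        · rw [if_neg h, if_neg h, mul_zero]
      rw [Finset.sum_congr rfl fun l _ => this l]
      simp
    have h3 : (Cm * Matrix.diagonal c * Dmᵀ) i j = ∑ k, Cm i k * c k * Dm j k := by
      rw [Matrix.mul_apply]
      refine Finset.sum_congr rfl fun k _ => ?_
      rw [Matrix.mul_diagonal, Matrix.transpose_apply]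
    rw [h1, h3]
    refine Finset.sum_congr rfl fun k _ => ?_
    rw [h2 k]
    ring
  have hCCt : Cm * Cmᵀ = 1 := by
    ext i j
    have h1 : (Cm * Cmᵀ) i j = ∑ k, Cm i k * Cm j k := by
      simp [Matrix.mul_apply, Matrix.transpose_apply]
    have h2 : (⟪e' i, e' j⟫ : ℝ) = ∑ k, Cm i k * Cm j k :=
      myParseval (hON s) (he'mem i)
    have h3 := orthonormal_iff_ite.mp he'.1 i j
    rw [h1, ← h2, h3]
    by_cases h : i = j <;> simp [h, Matrix.one_apply]
  have hDDt : Dm * Dmᵀ = 1 := by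
    ext i j
    have h1 : (Dm * Dmᵀ) i j = ∑ k, Dm i k * Dm j k := by
      simp [Matrix.mul_apply, Matrix.transpose_apply]
    have h2 : (⟪f' i, f' j⟫ : ℝ) = ∑ k, Dm i k * Dm j k :=
      myParseval (hON t) (hf'mem i)
    have h3 := orthonormal_iff_ite.mp hf'.1 i j
    rw [h1, ← h2, h3]
    by_cases h : i = j <;> simp [h, Matrix.one_apply]
  exact myMatSingVals_eq _ Cm Dm c hc0 hcanti hG hCCt hDDt

end Aux

/-- Additivity of Jordan angles along an `H`-curve: if `L(s)` is the `H`-curve with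
invariants `0 ≤ a_1 ≤ … ≤ a_p` built from an orthonormal system `e_1,…,e_p,f_1,…,f_p`,
and `s₁ < s₂ < s₃` with `a_p (s₃ - s₁) ≤ π/2`, then for every `j`
`Ψ_j[L(s₁),L(s₂)] + Ψ_j[L(s₂),L(s₃)] = Ψ_j[L(s₁),L(s₃)]`. -/
theorem jordanAngles_additive_on_HCurve (p q : ℕ) (hp : 1 ≤ p) (hpq : p ≤ q)
    (a : Fin p → ℝ) (ha0 : ∀ j, 0 ≤ a j) (hamono : Monotone a)
    (e f : Fin p → EuclideanSpace ℝ (Fin (p + q)))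
    (horth : Orthonormal ℝ (Sum.elim e f))
    (Lc : ℝ → Submodule ℝ (EuclideanSpace ℝ (Fin (p + q))))
    (hLc : Lc = fun s => Submodule.span ℝ
      (Set.range fun j : Fin p => Real.cos (a j * s) • e j + Real.sin (a j * s) • f j))
    (s₁ s₂ s₃ : ℝ) (h12 : s₁ < s₂) (h23 : s₂ < s₃)
    (hnear : a ⟨p - 1, by omega⟩ * (s₃ - s₁) ≤ π / 2) :
    ∀ j : Fin p,
      jordanAngles p (Lc s₁) (Lc s₂) j + jordanAngles p (Lc s₂) (Lc s₃) j =
        jordanAngles p (Lc s₁) (Lc s₃) j := by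
  intro j
  have hamax : ∀ k : Fin p, a k ≤ a ⟨p - 1, by omega⟩ := by
    intro k
    apply hamono
    have : (k : ℕ) ≤ p - 1 := by omega
    exact this
  have hamax0 : 0 ≤ a ⟨p - 1, by omega⟩ := ha0 _
  have hbound : ∀ s t : ℝ, s ≤ t → t - s ≤ s₃ - s₁ → ∀ k : Fin p, a k * (t - s) ≤ π / 2 := by
    intro s t hst hle k
    calc a k * (t - s) ≤ a ⟨p - 1, by omega⟩ * (s₃ - s₁) :=
          mul_le_mul (hamax k) hle (by linarith) hamax0
      _ ≤ π / 2 := hnear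
  have key : ∀ s t : ℝ, s ≤ t → t - s ≤ s₃ - s₁ →
      jordanAngles p (Lc s) (Lc t) j = a j * (t - s) := by
    intro s t hst hle
    have h2 : subSingVals p (Lc s) (Lc t) = fun k => Real.cos (a k * (t - s)) := by
      rw [hLc]
      exact mySubSingVals p q a ha0 hamono e f horth s t hst (hbound s t hst hle)
    show Real.arccos (subSingVals p (Lc s) (Lc t) j) = _
    rw [h2]
    refine Real.arccos_cos (mul_nonneg (ha0 j) (by linarith)) ?_
    have := hbound s t hst hle j
    linarith [Real.pi_pos]
  have e1 := key s₁ s₂ (le_of_lt h12) (by linarith)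
  have e2 := key s₂ s₃ (le_of_lt h23) (by linarith)
  have e3 := key s₁ s₃ (by linarith) (by linarith)
  rw [e1, e2, e3]
  ring
end

section
/- (Lidskii's theorem.) Let X and Y be Hermitian n×n complex matrices, and for a Hermitian matrix A let λ(A) ∈ ℝ^n denote the vector of its eigenvalues listed in decreasing order with multiplicity. Then λ(X + Y) lies in λ(X) + Z, where Z ⊂ ℝ^n is the convex hull of the set of all vectors obtained from λ(Y) by permuting its coordinates. -/
namespace LidskiiAux

open Matrix Finset Submodule Module

variable {n : ℕ}

noncomputable def sdPerm (v : Fin n → ℝ) : Equiv.Perm (Fin n) :=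
  (Fin.revPerm).trans (Tuple.sort v)

lemma sortDesc_eq_comp (v : Fin n → ℝ) : sortDesc v = v ∘ (sdPerm v) := rfl

lemma sortDesc_antitone (v : Fin n → ℝ) : Antitone (sortDesc v) := by
  intro i j hij
  have h := Tuple.monotone_sort v (show j.rev ≤ i.rev from Fin.rev_le_rev.mpr hij)
  exact h

lemma sum_sortDesc (v : Fin n → ℝ) : ∑ i, sortDesc v i = ∑ i, v i := by
  rw [sortDesc_eq_comp]
  exact Equiv.sum_comp (sdPerm v) v

/-- real quadratic form of a matrix -/
noncomputable def q (A : Matrix (Fin n) (Fin n) ℂ) (x : Fin n → ℂ) : ℝ :=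
  (star x ⬝ᵥ (A *ᵥ x)).re

noncomputable def nsq (x : Fin n → ℂ) : ℝ := ∑ j, Complex.normSq (x j)

lemma star_dot_self (x : Fin n → ℂ) : star x ⬝ᵥ x = ((nsq x : ℝ) : ℂ) := by
  simp only [dotProduct, nsq, Pi.star_apply, Complex.ofReal_sum]
  refine Finset.sum_congr rfl fun j _ => ?_
  rw [RCLike.star_def, Complex.normSq_eq_conj_mul_self]

lemma nsq_nonneg (x : Fin n → ℂ) : 0 ≤ nsq x :=
  Finset.sum_nonneg fun j _ => Complex.normSq_nonneg _

lemma nsq_pos (x : Fin n → ℂ) (hx : x ≠ 0) : 0 < nsq x := by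
  rcases Function.ne_iff.mp hx with ⟨j, hj⟩
  exact Finset.sum_pos' (fun i _ => Complex.normSq_nonneg _)
    ⟨j, Finset.mem_univ j, Complex.normSq_pos.mpr hj⟩

lemma quad_conj (U : Matrix.unitaryGroup (Fin n) ℂ) (d : Fin n → ℝ) (x : Fin n → ℂ) :
    q ((U : Matrix (Fin n) (Fin n) ℂ) * diagonal (fun j => (d j : ℂ)) * star (U : Matrix (Fin n) (Fin n) ℂ)) x
      = ∑ j, d j * Complex.normSq ((star (U : Matrix (Fin n) (Fin n) ℂ) *ᵥ x) j) := by
  set Um : Matrix (Fin n) (Fin n) ℂ := (U : Matrix (Fin n) (Fin n) ℂ)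
  set c : Fin n → ℂ := star Um *ᵥ x with hc
  have hstar : star x ᵥ* Um = star c := by
    rw [hc, star_mulVec, Matrix.star_eq_conjTranspose, conjTranspose_conjTranspose]
  have h1 : (Um * diagonal (fun j => (d j : ℂ)) * star Um) *ᵥ x
      = Um *ᵥ (diagonal (fun j => (d j : ℂ)) *ᵥ c) := by
    rw [hc, ← mulVec_mulVec, ← mulVec_mulVec]
  rw [q, h1, dotProduct_mulVec, hstar]
  have : star c ⬝ᵥ (diagonal (fun j => (d j : ℂ)) *ᵥ c)
      = ∑ j, ((d j : ℂ) * ((Complex.normSq (c j) : ℝ) : ℂ)) := by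
    simp only [dotProduct, mulVec_diagonal, Pi.star_apply]
    refine Finset.sum_congr rfl fun j _ => ?_
    rw [RCLike.star_def, show (starRingEnd ℂ) (c j) * ((d j : ℂ) * c j)
      = (d j : ℂ) * ((starRingEnd ℂ) (c j) * c j) from by ring,
      ← Complex.normSq_eq_conj_mul_self]
  rw [this]
  simp

lemma quad_conj_hermitian (U : Matrix.unitaryGroup (Fin n) ℂ) (d : Fin n → ℝ) :
    ((U : Matrix (Fin n) (Fin n) ℂ) * diagonal (fun j => (d j : ℂ)) * star (U : Matrix (Fin n) (Fin n) ℂ)).IsHermitian := by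
  have hd : (diagonal (fun j => (d j : ℂ))).IsHermitian := by
    apply isHermitian_diagonal_iff.mpr
    intro i; exact isSelfAdjoint_iff.mpr (by simp)
  simpa [Matrix.star_eq_conjTranspose] using
    isHermitian_mul_mul_conjTranspose (U : Matrix (Fin n) (Fin n) ℂ) hd

lemma nsq_mulVec_star_unitary (U : Matrix.unitaryGroup (Fin n) ℂ) (x : Fin n → ℂ) :
    nsq (star (U : Matrix (Fin n) (Fin n) ℂ) *ᵥ x) = nsq x := by
  set Um : Matrix (Fin n) (Fin n) ℂ := (U : Matrix (Fin n) (Fin n) ℂ)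
  set c : Fin n → ℂ := star Um *ᵥ x with hc
  have : star c ⬝ᵥ c = star x ⬝ᵥ x := by
    rw [hc, star_mulVec, Matrix.star_eq_conjTranspose, conjTranspose_conjTranspose,
      ← dotProduct_mulVec, mulVec_mulVec,
      show Um * Umᴴ = 1 from Matrix.mem_unitaryGroup_iff.mp U.2, one_mulVec]
  have h2 := star_dot_self c
  rw [this, star_dot_self x] at h2
  exact_mod_cast h2.symm

lemma q_spectral {A : Matrix (Fin n) (Fin n) ℂ} (hA : A.IsHermitian) (x : Fin n → ℂ) :
    q A x = ∑ j, hA.eigenvalues j *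
      Complex.normSq ((star (hA.eigenvectorUnitary : Matrix (Fin n) (Fin n) ℂ) *ᵥ x) j) := by
  have hd : (RCLike.ofReal ∘ hA.eigenvalues : Fin n → ℂ) = fun j => ((hA.eigenvalues j : ℝ) : ℂ) := rfl
  conv_lhs => rw [show A = _ from hA.spectral_theorem, Unitary.conjStarAlgAut_apply]
  rw [hd, quad_conj]

lemma q_add (A B : Matrix (Fin n) (Fin n) ℂ) (x : Fin n → ℂ) :
    q (A + B) x = q A x + q B x := by
  simp [q, add_mulVec, dotProduct_add]

lemma q_smul_one (t : ℝ) (x : Fin n → ℂ) :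
    q ((t : ℂ) • (1 : Matrix (Fin n) (Fin n) ℂ)) x = t * nsq x := by
  simp only [q, smul_mulVec, one_mulVec, dotProduct_smul]
  rw [star_dot_self]
  simp

/-- columns of a unitary matrix -/
noncomputable def col (U : Matrix.unitaryGroup (Fin n) ℂ) (j : Fin n) : Fin n → ℂ :=
  (U : Matrix (Fin n) (Fin n) ℂ) *ᵥ Pi.single j 1

lemma star_mulVec_col (U : Matrix.unitaryGroup (Fin n) ℂ) (j : Fin n) :
    star (U : Matrix (Fin n) (Fin n) ℂ) *ᵥ col U j = Pi.single j 1 := by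
  rw [col, mulVec_mulVec, show star (U : Matrix (Fin n) (Fin n) ℂ) * U = 1 from
    Matrix.mem_unitaryGroup_iff'.mp U.2, one_mulVec]

set_option maxHeartbeats 1000000 in
lemma col_linearIndependent (U : Matrix.unitaryGroup (Fin n) ℂ) :
    LinearIndependent ℂ (col U) := by
  have hb : LinearIndependent ℂ (fun j : Fin n => (Pi.single j 1 : Fin n → ℂ)) := by
    have h0 := (Pi.basisFun ℂ (Fin n)).linearIndependent
    have he : ⇑(Pi.basisFun ℂ (Fin n)) = fun j : Fin n => (Pi.single j 1 : Fin n → ℂ) :=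
      funext fun j => by simp
    rwa [he] at h0
  have hinj : LinearMap.ker ((U : Matrix (Fin n) (Fin n) ℂ).mulVecLin) = ⊥ := by
    rw [LinearMap.ker_eq_bot]
    intro a b hab
    simp only [mulVecLin_apply] at hab
    have := congrArg (fun v => star (U : Matrix (Fin n) (Fin n) ℂ) *ᵥ v) hab
    simpa [mulVec_mulVec, show star (U : Matrix (Fin n) (Fin n) ℂ) * U = 1 from
      Matrix.mem_unitaryGroup_iff'.mp U.2, one_mulVec] using this
  exact hb.map' ((U : Matrix (Fin n) (Fin n) ℂ).mulVecLin) hinj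

/-- span of a set of columns -/
noncomputable def colSpan (U : Matrix.unitaryGroup (Fin n) ℂ) (S : Finset (Fin n)) :
    Submodule ℂ (Fin n → ℂ) :=
  Submodule.span ℂ (col U '' (S : Set (Fin n)))

lemma finrank_colSpan (U : Matrix.unitaryGroup (Fin n) ℂ) (S : Finset (Fin n)) :
    finrank ℂ (colSpan U S) = S.card := by
  classical
  have hli : LinearIndependent ℂ ((↑) : (col U '' (S : Set (Fin n))) → (Fin n → ℂ)) := by
    have h1 : LinearIndependent ℂ (fun j : (S : Set (Fin n)) => col U j) :=
      (col_linearIndependent U).comp _ Subtype.val_injective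
    have h2 : LinearIndependent ℂ (fun x : Set.range (fun j : (S : Set (Fin n)) => col U j) => (x : Fin n → ℂ)) :=
      (linearIndepOn_id_range_iff h1.injective).mpr h1
    have : Set.range (fun j : (S : Set (Fin n)) => col U j) = col U '' (S : Set (Fin n)) := by
      rw [← Set.image_eq_range]
    rwa [this] at h2
  rw [colSpan, finrank_span_set_eq_card hli, Set.toFinset_image,
    Finset.card_image_of_injective _ (col_linearIndependent U).injective]
  simp

lemma coord_eq_zero_of_mem_colSpan (U : Matrix.unitaryGroup (Fin n) ℂ) (S : Finset (Fin n))
    {x : Fin n → ℂ} (hx : x ∈ colSpan U S) {j : Fin n} (hj : j ∉ S) :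
    (star (U : Matrix (Fin n) (Fin n) ℂ) *ᵥ x) j = 0 := by
  have hle : colSpan U S ≤ LinearMap.ker ((LinearMap.proj j).comp
      (star (U : Matrix (Fin n) (Fin n) ℂ)).mulVecLin) := by
    rw [colSpan, Submodule.span_le]
    rintro _ ⟨i, hi, rfl⟩
    have hij : i ≠ j := fun h => hj (h ▸ hi)
    simp only [SetLike.mem_coe, LinearMap.mem_ker, LinearMap.comp_apply, mulVecLin_apply,
      LinearMap.proj_apply]
    rw [star_mulVec_col]
    simp [Pi.single_apply, hij.symm]
  exact hle hx

lemma exists_ne_zero_mem_inf (V W : Submodule ℂ (Fin n → ℂ))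
    (h : n < finrank ℂ V + finrank ℂ W) : ∃ x : Fin n → ℂ, x ≠ 0 ∧ x ∈ V ⊓ W := by
  have htop : finrank ℂ ↥(V ⊔ W) ≤ n := by
    calc finrank ℂ ↥(V ⊔ W) ≤ finrank ℂ (Fin n → ℂ) := Submodule.finrank_le _
    _ = n := by simp
  have hsum := Submodule.finrank_sup_add_finrank_inf_eq V W
  have hpos : 0 < finrank ℂ (V ⊓ W : Submodule ℂ (Fin n → ℂ)) := by omega
  have hne : (V ⊓ W : Submodule ℂ (Fin n → ℂ)) ≠ ⊥ := by
    intro hbot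
    rw [hbot] at hpos
    simp at hpos
  rcases (Submodule.ne_bot_iff _).mp hne with ⟨x, hx, hx0⟩
  exact ⟨x, hx0, hx⟩

  -- ===== chunk d =====

/-- decreasingly sorted eigenvalues -/
noncomputable def mu {A : Matrix (Fin n) (Fin n) ℂ} (hA : A.IsHermitian) : Fin n → ℝ :=
  sortDesc hA.eigenvalues

lemma mu_antitone {A : Matrix (Fin n) (Fin n) ℂ} (hA : A.IsHermitian) : Antitone (mu hA) :=
  sortDesc_antitone _

lemma mu_eq_comp {A : Matrix (Fin n) (Fin n) ℂ} (hA : A.IsHermitian) :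
    mu hA = hA.eigenvalues ∘ (sdPerm hA.eigenvalues) := rfl

lemma sum_mu {A : Matrix (Fin n) (Fin n) ℂ} (hA : A.IsHermitian) :
    ∑ i, mu hA i = (Matrix.trace A).re := by
  have h1 : ∑ i, mu hA i = ∑ i, hA.eigenvalues i := sum_sortDesc _
  have h2 : Matrix.trace A = ∑ i, ((hA.eigenvalues i : ℝ) : ℂ) := by
    conv_lhs => rw [show A = _ from hA.spectral_theorem, Unitary.conjStarAlgAut_apply]
    rw [Matrix.trace_mul_cycle,
      show star (hA.eigenvectorUnitary : Matrix (Fin n) (Fin n) ℂ) * hA.eigenvectorUnitary = 1 from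
        Matrix.mem_unitaryGroup_iff'.mp hA.eigenvectorUnitary.2, Matrix.one_mul, Matrix.trace_diagonal]
    rfl
  rw [h1]
  have := congrArg Complex.re h2
  simpa using this.symm

lemma q_le_support {A : Matrix (Fin n) (Fin n) ℂ} (hA : A.IsHermitian) {x : Fin n → ℂ} {t : ℝ}
    (h : ∀ j, (star (hA.eigenvectorUnitary : Matrix (Fin n) (Fin n) ℂ) *ᵥ x) j ≠ 0 →
      hA.eigenvalues j ≤ t) :
    q A x ≤ t * nsq x := by
  rw [q_spectral hA, ← nsq_mulVec_star_unitary hA.eigenvectorUnitary x, nsq, Finset.mul_sum]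
  refine Finset.sum_le_sum fun j _ => ?_
  by_cases hj : (star (hA.eigenvectorUnitary : Matrix (Fin n) (Fin n) ℂ) *ᵥ x) j = 0
  · rw [hj]; simp
  · exact mul_le_mul_of_nonneg_right (h j hj) (Complex.normSq_nonneg _)

lemma q_ge_support {A : Matrix (Fin n) (Fin n) ℂ} (hA : A.IsHermitian) {x : Fin n → ℂ} {t : ℝ}
    (h : ∀ j, (star (hA.eigenvectorUnitary : Matrix (Fin n) (Fin n) ℂ) *ᵥ x) j ≠ 0 →
      t ≤ hA.eigenvalues j) :
    t * nsq x ≤ q A x := by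
  rw [q_spectral hA, ← nsq_mulVec_star_unitary hA.eigenvectorUnitary x, nsq, Finset.mul_sum]
  refine Finset.sum_le_sum fun j _ => ?_
  by_cases hj : (star (hA.eigenvectorUnitary : Matrix (Fin n) (Fin n) ℂ) *ᵥ x) j = 0
  · rw [hj]; simp
  · exact mul_le_mul_of_nonneg_right (h j hj) (Complex.normSq_nonneg _)

/-- the top subspace for Courant-Fischer -/
noncomputable def highSpace {A : Matrix (Fin n) (Fin n) ℂ} (hA : A.IsHermitian) (i : Fin n) :
    Submodule ℂ (Fin n → ℂ) :=
  colSpan hA.eigenvectorUnitary (Finset.image (sdPerm hA.eigenvalues) (Finset.Iic i))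

lemma finrank_highSpace {A : Matrix (Fin n) (Fin n) ℂ} (hA : A.IsHermitian) (i : Fin n) :
    finrank ℂ (highSpace hA i) = i.1 + 1 := by
  rw [highSpace, finrank_colSpan, Finset.card_image_of_injective _ (sdPerm _).injective,
    Fin.card_Iic]

lemma q_ge_of_mem_highSpace {A : Matrix (Fin n) (Fin n) ℂ} (hA : A.IsHermitian) (i : Fin n)
    {x : Fin n → ℂ} (hx : x ∈ highSpace hA i) : mu hA i * nsq x ≤ q A x := by
  refine q_ge_support hA fun j hj => ?_
  by_contra hlt
  have hjS : j ∈ Finset.image (sdPerm hA.eigenvalues) (Finset.Iic i) := by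
    by_contra hjn
    exact hj (coord_eq_zero_of_mem_colSpan _ _ hx hjn)
  rcases Finset.mem_image.mp hjS with ⟨m, hm, rfl⟩
  have : mu hA i ≤ mu hA m := mu_antitone hA (Finset.mem_Iic.mp hm)
  rw [mu_eq_comp] at this
  exact hlt this

lemma cf_low {A : Matrix (Fin n) (Fin n) ℂ} (hA : A.IsHermitian) (i : Fin n)
    (V : Submodule ℂ (Fin n → ℂ)) (hV : i.1 + 1 ≤ finrank ℂ V) :
    ∃ x : Fin n → ℂ, x ≠ 0 ∧ x ∈ V ∧ q A x ≤ mu hA i * nsq x := by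
  classical
  set W := colSpan hA.eigenvectorUnitary (Finset.image (sdPerm hA.eigenvalues) (Finset.Ici i))
  have hW : finrank ℂ W = n - i.1 := by
    rw [finrank_colSpan, Finset.card_image_of_injective _ (sdPerm _).injective, Fin.card_Ici]
  have hi : i.1 < n := i.isLt
  obtain ⟨x, hx0, hx⟩ := exists_ne_zero_mem_inf V W (by omega)
  refine ⟨x, hx0, hx.1, ?_⟩
  refine q_le_support hA fun j hj => ?_
  have hjS : j ∈ Finset.image (sdPerm hA.eigenvalues) (Finset.Ici i) := by
    by_contra hjn
    exact hj (coord_eq_zero_of_mem_colSpan _ _ hx.2 hjn)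
  rcases Finset.mem_image.mp hjS with ⟨m, hm, rfl⟩
  have : mu hA m ≤ mu hA i := mu_antitone hA (Finset.mem_Ici.mp hm)
  rw [mu_eq_comp] at this
  exact this

lemma mu_le_mu {A B : Matrix (Fin n) (Fin n) ℂ} (hA : A.IsHermitian) (hB : B.IsHermitian)
    (h : ∀ x, q A x ≤ q B x) (i : Fin n) : mu hA i ≤ mu hB i := by
  obtain ⟨x, hx0, hxV, hqB⟩ := cf_low hB i (highSpace hA i) (by rw [finrank_highSpace])
  have hqA := q_ge_of_mem_highSpace hA i hxV
  have hn := nsq_pos x hx0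
  have : mu hA i * nsq x ≤ mu hB i * nsq x := le_trans hqA (le_trans (h x) hqB)
  exact le_of_mul_le_mul_right this hn

lemma mu_shift {A : Matrix (Fin n) (Fin n) ℂ} (hA : A.IsHermitian) (t : ℝ)
    (hA' : (A + (t : ℂ) • (1 : Matrix (Fin n) (Fin n) ℂ)).IsHermitian) (i : Fin n) :
    mu hA' i = mu hA i + t := by
  have hq : ∀ x, q (A + (t : ℂ) • (1 : Matrix (Fin n) (Fin n) ℂ)) x = q A x + t * nsq x := by
    intro x; rw [q_add, q_smul_one]
  apply le_antisymm
  · obtain ⟨x, hx0, hxV, hqA⟩ := cf_low hA i (highSpace hA' i) (by rw [finrank_highSpace])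
    have hqA' := q_ge_of_mem_highSpace hA' i hxV
    rw [hq] at hqA'
    have hn := nsq_pos x hx0
    have : mu hA' i * nsq x ≤ (mu hA i + t) * nsq x := by
      rw [add_mul]
      calc mu hA' i * nsq x ≤ q A x + t * nsq x := hqA'
      _ ≤ mu hA i * nsq x + t * nsq x := by linarith
    exact le_of_mul_le_mul_right this hn
  · obtain ⟨x, hx0, hxV, hqA'⟩ := cf_low hA' i (highSpace hA i) (by rw [finrank_highSpace])
    have hqA := q_ge_of_mem_highSpace hA i hxV
    rw [hq] at hqA'
    have hn := nsq_pos x hx0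
    have : (mu hA i + t) * nsq x ≤ mu hA' i * nsq x := by
      rw [add_mul]; linarith
    exact le_of_mul_le_mul_right this hn
  -- ===== chunk e =====

lemma trace_conj_re (U : Matrix.unitaryGroup (Fin n) ℂ) (d : Fin n → ℝ) :
    (((U : Matrix (Fin n) (Fin n) ℂ) * diagonal (fun j => (d j : ℂ)) *
      star (U : Matrix (Fin n) (Fin n) ℂ)).trace).re = ∑ j, d j := by
  rw [Matrix.trace_mul_cycle,
    show star (U : Matrix (Fin n) (Fin n) ℂ) * (U : Matrix (Fin n) (Fin n) ℂ) = 1 from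
      Matrix.mem_unitaryGroup_iff'.mp U.2, Matrix.one_mul, Matrix.trace_diagonal]
  simp

lemma isHermitian_real_smul_one (t : ℝ) :
    ((t : ℂ) • (1 : Matrix (Fin n) (Fin n) ℂ)).IsHermitian := by
  unfold Matrix.IsHermitian
  rw [conjTranspose_smul, conjTranspose_one]
  congr 1
  simp

lemma wielandt {X Y : Matrix (Fin n) (Fin n) ℂ} (hX : X.IsHermitian) (hY : Y.IsHermitian)
    (I : Finset (Fin n)) (m : Fin n) (hm : I.card = m.1 + 1) :
    ∑ i ∈ I, mu (hX.add hY) i ≤ ∑ i ∈ I, mu hX i + ∑ j ∈ Finset.Iic m, mu hY j := by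
  classical
  set t : ℝ := mu hY m with ht
  set d : Fin n → ℝ := fun j => max (hY.eigenvalues j - t) 0 with hd
  set UY := hY.eigenvectorUnitary with hUY
  set P : Matrix (Fin n) (Fin n) ℂ :=
    (UY : Matrix (Fin n) (Fin n) ℂ) * diagonal (fun j => (d j : ℂ)) *
      star (UY : Matrix (Fin n) (Fin n) ℂ) with hPdef
  have hP : P.IsHermitian := quad_conj_hermitian UY d
  have hXP : (X + P).IsHermitian := hX.add hP
  have hXPt : (X + P + (t : ℂ) • (1 : Matrix (Fin n) (Fin n) ℂ)).IsHermitian :=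
    hXP.add (isHermitian_real_smul_one t)
  -- pointwise quadratic form comparisons
  have hqP_nonneg : ∀ x, 0 ≤ q P x := by
    intro x
    rw [hPdef, quad_conj]
    exact Finset.sum_nonneg fun j _ =>
      mul_nonneg (le_max_right _ _) (Complex.normSq_nonneg _)
  have hYP : ∀ x, q Y x ≤ q P x + t * nsq x := by
    intro x
    rw [hPdef, quad_conj, q_spectral hY, ← hUY, ← nsq_mulVec_star_unitary UY x, nsq,
      Finset.mul_sum, ← Finset.sum_add_distrib]
    refine Finset.sum_le_sum fun j _ => ?_
    have h1 : hY.eigenvalues j ≤ d j + t := by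
      rw [hd]; simp only []
      have := le_max_left (hY.eigenvalues j - t) 0
      linarith
    have h2 : d j * Complex.normSq ((star (UY : Matrix (Fin n) (Fin n) ℂ) *ᵥ x) j)
        + t * Complex.normSq ((star (UY : Matrix (Fin n) (Fin n) ℂ) *ᵥ x) j)
        = (d j + t) * Complex.normSq ((star (UY : Matrix (Fin n) (Fin n) ℂ) *ᵥ x) j) := by ring
    rw [h2]
    exact mul_le_mul_of_nonneg_right h1 (Complex.normSq_nonneg _)
  -- eigenvalue comparisons
  have step2 : ∀ i, mu (hX.add hY) i ≤ mu hXP i + t := by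
    intro i
    have h1 : ∀ x, q (X + Y) x ≤ q (X + P + (t : ℂ) • (1 : Matrix (Fin n) (Fin n) ℂ)) x := by
      intro x
      rw [q_add, q_add, q_add, q_smul_one]
      have := hYP x
      linarith
    have h2 := mu_le_mu (hX.add hY) hXPt h1 i
    rwa [mu_shift hXP t hXPt i] at h2
  have step3 : ∀ i, mu hX i ≤ mu hXP i := by
    intro i
    refine mu_le_mu hX hXP (fun x => ?_) i
    rw [q_add]
    have := hqP_nonneg x
    linarith
  -- trace bound
  have step5 : ∑ i ∈ I, (mu hXP i - mu hX i) ≤ ∑ j, d j := by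
    calc ∑ i ∈ I, (mu hXP i - mu hX i) ≤ ∑ i, (mu hXP i - mu hX i) := by
          refine Finset.sum_le_sum_of_subset_of_nonneg (Finset.subset_univ I) fun i _ _ => ?_
          have := step3 i; linarith
    _ = (Matrix.trace (X + P)).re - (Matrix.trace X).re := by
          rw [Finset.sum_sub_distrib, sum_mu hXP, sum_mu hX]
    _ = (Matrix.trace P).re := by
          rw [Matrix.trace_add, Complex.add_re]; ring
    _ = ∑ j, d j := by rw [hPdef]; exact trace_conj_re UY d
  -- identify the trace sum
  have step6 : ∑ j, d j = ∑ j ∈ Finset.Iic m, mu hY j - (m.1 + 1 : ℝ) * t := by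
    have hperm : ∑ j, d j = ∑ j, max (mu hY j - t) 0 := by
      rw [hd, mu_eq_comp]
      exact (Equiv.sum_comp (sdPerm hY.eigenvalues) (fun j => max (hY.eigenvalues j - t) 0)).symm
    have hsub : ∑ j ∈ Finset.Iic m, max (mu hY j - t) 0 = ∑ j, max (mu hY j - t) 0 := by
      refine Finset.sum_subset (Finset.subset_univ _) fun j _ hj => ?_
      have hmj : m < j := by
        rcases lt_or_ge m j with h | h
        · exact h
        · exact absurd (Finset.mem_Iic.mpr h) hj
      have : mu hY j ≤ t := ht ▸ mu_antitone hY hmj.le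
      rw [max_eq_right (by linarith)]
    have hval : ∑ j ∈ Finset.Iic m, max (mu hY j - t) 0 = ∑ j ∈ Finset.Iic m, (mu hY j - t) := by
      refine Finset.sum_congr rfl fun j hj => ?_
      have : t ≤ mu hY j := ht ▸ mu_antitone hY (Finset.mem_Iic.mp hj)
      rw [max_eq_left]; linarith
    rw [hperm, ← hsub, hval, Finset.sum_sub_distrib, Finset.sum_const, Fin.card_Iic]
    push_cast
    ring
  -- combine
  have step4 : ∑ i ∈ I, mu (hX.add hY) i ≤ ∑ i ∈ I, mu hXP i + (m.1 + 1 : ℝ) * t := by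
    calc ∑ i ∈ I, mu (hX.add hY) i ≤ ∑ i ∈ I, (mu hXP i + t) := Finset.sum_le_sum fun i _ => step2 i
    _ = ∑ i ∈ I, mu hXP i + (I.card : ℝ) * t := by
          rw [Finset.sum_add_distrib, Finset.sum_const, nsmul_eq_mul]
    _ = ∑ i ∈ I, mu hXP i + (m.1 + 1 : ℝ) * t := by rw [hm]; push_cast; ring
  have : ∑ i ∈ I, mu hXP i ≤ ∑ i ∈ I, mu hX i + ∑ j, d j := by
    have := step5
    rw [Finset.sum_sub_distrib] at this
    linarith
  rw [step6] at this
  linarith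
  -- ===== chunk f =====

lemma rearrange_le (c w : Fin n → ℝ) :
    ∑ j, c j * w j ≤ ∑ m, sortDesc c m * sortDesc w m := by
  classical
  have hmono : Monovary (sortDesc c) (sortDesc w) := by
    intro i j hij
    rcases le_or_gt j i with h | h
    · exact sortDesc_antitone c h
    · exact absurd (sortDesc_antitone w h.le) (not_le.mpr hij)
  have h1 : ∑ j, c j * w j = ∑ m, sortDesc c m * sortDesc w
      (((sdPerm w)⁻¹ * (sdPerm c)) m) := by
    rw [← Equiv.sum_comp (sdPerm c) (fun j => c j * w j)]
    refine Finset.sum_congr rfl fun m _ => ?_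
    rw [sortDesc_eq_comp c, sortDesc_eq_comp w]
    simp [Function.comp]
  rw [h1]
  exact hmono.sum_mul_comp_perm_le_sum_mul

lemma abel_nonpos (f g : ℕ → ℝ) (hf : ∀ i, i + 1 < n → f (i + 1) ≤ f i)
    (hG : ∀ k, k < n → ∑ j ∈ Finset.range (k + 1), g j ≤ 0)
    (hG0 : ∑ j ∈ Finset.range n, g j = 0) :
    ∑ i ∈ Finset.range n, f i * g i ≤ 0 := by
  have := Finset.sum_range_by_parts f g n
  simp only [smul_eq_mul] at this
  rw [this, hG0, mul_zero, zero_sub, neg_nonpos]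
  refine Finset.sum_nonneg fun i hi => ?_
  have hi' := Finset.mem_range.mp hi
  have h1 : f (i + 1) - f i ≤ 0 := by
    have := hf i (by omega); linarith
  have h2 : ∑ j ∈ Finset.range (i + 1), g j ≤ 0 := hG (i) (by omega)
  nlinarith

lemma sum_Iic_eq_sum_range (b : Fin n → ℝ) (m : Fin n) :
    ∑ j ∈ Finset.Iic m, b j
      = ∑ j ∈ Finset.range (m.1 + 1), (if h : j < n then b ⟨j, h⟩ else 0) := by
  refine Finset.sum_nbij' (fun j => (j : ℕ)) (fun j => if h : j < n then ⟨j, h⟩ else m) ?_ ?_ ?_ ?_ ?_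
  · intro a ha
    simp only [Finset.mem_range]
    exact Nat.lt_succ_of_le (Fin.le_def.mp (Finset.mem_Iic.mp ha))
  · intro a ha
    have ham := Finset.mem_range.mp ha
    have han : a < n := lt_of_lt_of_le ham (Nat.succ_le_of_lt m.isLt)
    show (if h : a < n then (⟨a, h⟩ : Fin n) else m) ∈ Finset.Iic m
    rw [dif_pos han]
    exact Finset.mem_Iic.mpr (Fin.le_def.mpr (by simpa using Nat.lt_succ_iff.mp ham))
  · intro a ha
    simp [a.isLt]
  · intro a ha
    have ham := Finset.mem_range.mp ha
    have han : a < n := lt_of_lt_of_le ham (Nat.succ_le_of_lt m.isLt)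
    simp [han]
  · intro a ha
    simp [a.isLt]

lemma key_sum (z y : Fin n → ℝ)
    (h1 : ∀ m : Fin n, ∑ j ∈ Finset.Iic m, sortDesc z j ≤ ∑ j ∈ Finset.Iic m, y j)
    (h2 : ∑ j, z j = ∑ j, y j) (hy : Antitone y) (c : Fin n → ℝ) :
    ∑ j, c j * z j ≤ ∑ m, sortDesc c m * y m := by
  classical
  have hr := rearrange_le c z
  set d := sortDesc c with hd
  set b : Fin n → ℝ := fun j => sortDesc z j - y j with hb
  have habel : ∑ j, d j * b j ≤ 0 := by
    set F : ℕ → ℝ := fun k => if h : k < n then d ⟨k, h⟩ else 0 with hF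
    set G : ℕ → ℝ := fun k => if h : k < n then b ⟨k, h⟩ else 0 with hG
    have hconv : ∑ j, d j * b j = ∑ i ∈ Finset.range n, F i * G i := by
      rw [← Fin.sum_univ_eq_sum_range (fun i => F i * G i) n]
      refine Finset.sum_congr rfl fun j _ => ?_
      simp [hF, hG, j.isLt]
    rw [hconv]
    refine abel_nonpos F G ?_ ?_ ?_
    · intro i hi
      have h1n : i < n := by omega
      simp only [hF, dif_pos hi, dif_pos h1n]
      exact sortDesc_antitone c (Fin.mk_le_mk.mpr (by omega))
    · intro k hk
      have : ∑ j ∈ Finset.range (k + 1), G j = ∑ j ∈ Finset.Iic (⟨k, hk⟩ : Fin n), b j := by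
        rw [sum_Iic_eq_sum_range]
      rw [this]
      have := h1 ⟨k, hk⟩
      rw [hb]
      rw [Finset.sum_sub_distrib]
      linarith
    · rw [← Fin.sum_univ_eq_sum_range (fun i => G i) n]
      have : ∑ j : Fin n, G j.1 = ∑ j : Fin n, b j := by
        refine Finset.sum_congr rfl fun j _ => by simp [hG, j.isLt]
      rw [this, hb, Finset.sum_sub_distrib, sum_sortDesc, h2]
      ring
  have hsplit : ∑ m, d m * sortDesc z m = ∑ m, d m * b m + ∑ m, d m * y m := by
    rw [← Finset.sum_add_distrib]
    refine Finset.sum_congr rfl fun m _ => by rw [hb]; ring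
  linarith

lemma mem_permutohedron (y z : Fin n → ℝ)
    (hkey : ∀ c : Fin n → ℝ, ∑ j, c j * z j ≤ ∑ m, sortDesc c m * y m) :
    z ∈ convexHull ℝ {w : Fin n → ℝ | ∃ σ : Equiv.Perm (Fin n), w = y ∘ σ} := by
  classical
  set T : Set (Fin n → ℝ) := {w | ∃ σ : Equiv.Perm (Fin n), w = y ∘ σ} with hT
  have hTfin : T.Finite := by
    have : T = Set.range (fun σ : Equiv.Perm (Fin n) => y ∘ σ) := by
      ext w; constructor
      · rintro ⟨σ, rfl⟩; exact ⟨σ, rfl⟩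
      · rintro ⟨σ, rfl⟩; exact ⟨σ, rfl⟩
    rw [this]; exact Set.finite_range _
  by_contra hz
  obtain ⟨f, u, hfa, hfu⟩ := geometric_hahn_banach_closed_point
    (convex_convexHull ℝ T) ((hTfin.isCompact_convexHull (𝕜 := ℝ)).isClosed) hz
  set c : Fin n → ℝ := fun j => f (fun k => if j = k then 1 else 0) with hc
  have hf : ∀ w : Fin n → ℝ, f w = ∑ j, w j * c j := by
    intro w
    conv_lhs => rw [pi_eq_sum_univ w, map_sum]
    refine Finset.sum_congr rfl fun j _ => ?_
    rw [f.map_smul, smul_eq_mul, hc]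
  set ρ := sdPerm c with hρ
  have hmem : y ∘ (ρ⁻¹ : Equiv.Perm (Fin n)) ∈ convexHull ℝ T :=
    subset_convexHull ℝ T ⟨ρ⁻¹, rfl⟩
  have hcalc : f (y ∘ (ρ⁻¹ : Equiv.Perm (Fin n))) = ∑ m, sortDesc c m * y m := by
    rw [hf]
    rw [← Equiv.sum_comp ρ (fun j => (y ∘ (ρ⁻¹ : Equiv.Perm (Fin n))) j * c j)]
    refine Finset.sum_congr rfl fun m _ => ?_
    rw [sortDesc_eq_comp c, ← hρ]
    simp [Function.comp]
    ring
  have hlt := hfa _ hmem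
  rw [hcalc] at hlt
  rw [hf] at hfu
  have := hkey c
  have h2 : ∑ j, z j * c j = ∑ j, c j * z j := by
    refine Finset.sum_congr rfl fun j _ => mul_comm _ _
  rw [h2] at hfu
  linarith

end LidskiiAux


/-- **Lidskii's theorem.** For Hermitian matrices `X, Y`, with `λ(A)` the decreasingly
ordered vector of eigenvalues of `A`, one has `λ(X+Y) ∈ λ(X) + Z`, where `Z` is the convex
hull of the set of all vectors obtained from `λ(Y)` by permuting its coordinates. -/
theorem lidskii (n : ℕ) (X Y : Matrix (Fin n) (Fin n) ℂ)
    (hX : X.IsHermitian) (hY : Y.IsHermitian) :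
    ∃ z ∈ convexHull ℝ {w : Fin n → ℝ |
        ∃ σ : Equiv.Perm (Fin n), w = sortDesc hY.eigenvalues ∘ σ},
      sortDesc (hX.add hY).eigenvalues = sortDesc hX.eigenvalues + z := by
  classical
  open LidskiiAux in
  set y : Fin n → ℝ := mu hY with hy
  set z : Fin n → ℝ := fun i => mu (hX.add hY) i - mu hX i with hz
  have h2 : ∑ j, z j = ∑ j, y j := by
    rw [hz, hy]
    simp only [Finset.sum_sub_distrib]
    rw [sum_mu (hX.add hY), sum_mu hX, sum_mu hY, Matrix.trace_add, Complex.add_re]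
    ring
  have h1 : ∀ m : Fin n, ∑ j ∈ Finset.Iic m, sortDesc z j ≤ ∑ j ∈ Finset.Iic m, y j := by
    intro m
    set π := sdPerm z with hπ
    have hs : ∑ j ∈ Finset.Iic m, sortDesc z j = ∑ i ∈ Finset.image π (Finset.Iic m), z i := by
      rw [Finset.sum_image (fun a _ b _ h => π.injective h)]
      exact Finset.sum_congr rfl fun j _ => by rw [sortDesc_eq_comp z, ← hπ]; rfl
    have hcard : (Finset.image π (Finset.Iic m)).card = m.1 + 1 := by
      rw [Finset.card_image_of_injective _ π.injective, Fin.card_Iic]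
    have hw := wielandt hX hY (Finset.image π (Finset.Iic m)) m hcard
    rw [hs]
    have : ∑ i ∈ Finset.image π (Finset.Iic m), z i
        = ∑ i ∈ Finset.image π (Finset.Iic m), mu (hX.add hY) i
          - ∑ i ∈ Finset.image π (Finset.Iic m), mu hX i := by
      rw [hz, Finset.sum_sub_distrib]
    rw [this, hy]
    linarith
  have hkey := key_sum z y h1 h2 (hy ▸ mu_antitone hY)
  refine ⟨z, mem_permutohedron y z hkey, ?_⟩
  funext i
  simp only [Pi.add_apply]
  show mu (hX.add hY) i = mu hX i + z i
  rw [hz]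
  ring
end
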